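/- arXiv:2404.03851 — 3 statements merged into one kernel-verified Lean document; each statement's English description precedes it below -/
import Mathlib

section
/- Let a, k be integers with 0 ≤ a ≤ k. (i) For every n ≥ 2: 𝒞^{(n)}_{(a, 0^{n−1}, k−a)}(z, q) = Σ_{i=0}^{a} Σ_{j=0}^{k−a} (zq)^{i+j} · 𝒟^{(n+1)}_{(i, a−i, 0^{n−2}, k−a−j, j)}(zq, q), where the 𝒟-subscript is the (n+2)-tuple with i in position 0, a−i in position 1, k−a−j in position n, and j in position n+1; for n = 1 the same holds with the 𝒟-subscript interpreted as (i, k−i−j, j). (ii) For every n ≥ 1: 𝒟^{(n+1)}_{(a, 0^{n}, k−a)}(z, q) = 𝒞^{(n)}_{(a, 0^{n−1}, k−a)}(zq, q). -/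
noncomputable section

/-- The weight (sum of parts) of a coloured partition given by its multiplicity
function `f`, where `f (i, c)` is the number of parts equal to `i` of colour `c`. -/
def wt (f : ℕ × ℕ →₀ ℕ) : ℕ := f.sum fun p v => p.1 * v

/-- The length (number of parts) of a coloured partition. -/
def len (f : ℕ × ℕ →₀ ℕ) : ℕ := f.sum fun _ v => v

/-- `f` is a type-`C` coloured partition for rank `n`: parts are at least `1`, colours
lie in `{1, …, 2n+1}`, and parts of colour `c` have the same parity as `c`
(i.e. `fᵢ⁽ᶜ⁾ = 0` unless `i + c` is even). -/
def IsCPC (n : ℕ) (f : ℕ × ℕ →₀ ℕ) : Prop :=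
  ∀ p ∈ f.support, 1 ≤ p.1 ∧ 1 ≤ p.2 ∧ p.2 ≤ 2 * n + 1 ∧ (p.1 + p.2) % 2 = 0

/-- The extended frequencies of a type-`C` coloured partition, with boundary conditions
`f₋₁⁽²ᶜ⁺¹⁾ = k c` (for `0 ≤ c ≤ n`) and `f₀⁽²ᶜ⁾ = 0`. -/
def fextC (k : ℕ → ℕ) (f : ℕ × ℕ →₀ ℕ) (i : ℤ) (c : ℕ) : ℕ :=
  if i = -1 then (if c % 2 = 1 then k ((c - 1) / 2) else 0) else f (i.toNat, c)

/-- Membership in the set `𝒞_{k₀,…,kₙ}`: `f` is a type-`C` coloured partition and every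
path — a sequence of integers `p 0, …, p (2n)` with `p j ≥ -1`, `p j + j + 1` even
(entry `j` is read in colour `j + 1`) and `|p (j+1) - p j| = 1` — has total weight at
most `k₀ + ⋯ + kₙ`. -/
def MemC (n : ℕ) (k : ℕ → ℕ) (f : ℕ × ℕ →₀ ℕ) : Prop :=
  IsCPC n f ∧
  ∀ p : ℕ → ℤ,
    (∀ j < 2 * n + 1, -1 ≤ p j ∧ (p j + (j : ℤ) + 1) % 2 = 0) →
    (∀ j, j + 1 < 2 * n + 1 → |p (j + 1) - p j| = 1) →
    ∑ j ∈ Finset.range (2 * n + 1), fextC k f (p j) (j + 1) ≤ ∑ c ∈ Finset.range (n + 1), k c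

/-- `f` is a type-`D` coloured partition for rank `n`: parts are at least `1`, colours
lie in `{1, …, 2n−1}`, and `fᵢ⁽ᶜ⁾ = 0` unless `i + c` is odd. -/
def IsCPD (n : ℕ) (f : ℕ × ℕ →₀ ℕ) : Prop :=
  ∀ p ∈ f.support, 1 ≤ p.1 ∧ 1 ≤ p.2 ∧ p.2 ≤ 2 * n - 1 ∧ (p.1 + p.2) % 2 = 1

/-- The extended frequencies of a type-`D` coloured partition, with boundary conditions
`f₋₁⁽²ᶜ⁾ = k c` (for `1 ≤ c ≤ n−1`), `f₀⁽¹⁾ = k 0`, `f₀⁽²ⁿ⁻¹⁾ = k n` and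
`f₀⁽²ᶜ⁻¹⁾ = 0` otherwise. -/
def fextD (n : ℕ) (k : ℕ → ℕ) (f : ℕ × ℕ →₀ ℕ) (i : ℤ) (c : ℕ) : ℕ :=
  if i = -1 then (if c % 2 = 0 then k (c / 2) else 0)
  else if i = 0 then (if c = 1 then k 0 else if c = 2 * n - 1 then k n else 0)
  else f (i.toNat, c)

/-- Membership in the set `𝒟_{k₀,…,kₙ}`: `f` is a type-`D` coloured partition and every
path — a sequence of integers `p 0, …, p (2n-2)` with `p j ≥ -1`, `p j + j + 1` odd
(entry `j` is read in colour `j + 1`) and `|p (j+1) - p j| = 1` — has total weight at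
most `k₀ + ⋯ + kₙ`. -/
def MemD (n : ℕ) (k : ℕ → ℕ) (f : ℕ × ℕ →₀ ℕ) : Prop :=
  IsCPD n f ∧
  ∀ p : ℕ → ℤ,
    (∀ j < 2 * n - 1, -1 ≤ p j ∧ (p j + (j : ℤ) + 1) % 2 = 1) →
    (∀ j, j + 1 < 2 * n - 1 → |p (j + 1) - p j| = 1) →
    ∑ j ∈ Finset.range (2 * n - 1), fextD n k f (p j) (j + 1) ≤ ∑ c ∈ Finset.range (n + 1), k c

/-- The two-variable generating function `𝒞⁽ⁿ⁾_{(k₀,…,kₙ)}(z,q)`, a power series in the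
outer variable `z` with coefficients power series in `q`: the coefficient of `zˡ qᴺ` is
the number of partitions in `𝒞_{k₀,…,kₙ}` with `l(λ) = l` and `|λ| = N`. -/
def CGF (n : ℕ) (k : ℕ → ℕ) : PowerSeries (PowerSeries ℚ) :=
  PowerSeries.mk fun l => PowerSeries.mk fun N =>
    (Nat.card {f : ℕ × ℕ →₀ ℕ // MemC n k f ∧ len f = l ∧ wt f = N} : ℚ)

/-- The two-variable generating function `𝒟⁽ⁿ⁾_{(k₀,…,kₙ)}(z,q)`. -/
def DGF (n : ℕ) (k : ℕ → ℕ) : PowerSeries (PowerSeries ℚ) :=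
  PowerSeries.mk fun l => PowerSeries.mk fun N =>
    (Nat.card {f : ℕ × ℕ →₀ ℕ // MemD n k f ∧ len f = l ∧ wt f = N} : ℚ)

/-- The substitution `z ↦ z qᶜ` on a two-variable series. -/
def zsub (c : ℕ) (F : PowerSeries (PowerSeries ℚ)) : PowerSeries (PowerSeries ℚ) :=
  PowerSeries.mk fun l =>
    (PowerSeries.X : PowerSeries ℚ) ^ (c * l) * PowerSeries.coeff l F

/-- The variable `z`. -/
def Zv : PowerSeries (PowerSeries ℚ) := PowerSeries.X

/-- The variable `q`. -/
def Qv : PowerSeries (PowerSeries ℚ) := PowerSeries.C PowerSeries.X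


namespace CMPP


def upE : ℕ × ℕ ↪ ℕ × ℕ :=
  ⟨fun p => (p.1 + 1, p.2), by rintro ⟨a, b⟩ ⟨c, d⟩ h; simpa [Prod.ext_iff] using h⟩

def up (f : ℕ × ℕ →₀ ℕ) : ℕ × ℕ →₀ ℕ := Finsupp.embDomain upE f

def down (g : ℕ × ℕ →₀ ℕ) : ℕ × ℕ →₀ ℕ :=
  Finsupp.comapDomain (fun p : ℕ × ℕ => (p.1 + 1, p.2)) g
    (fun p _ q _ h => by cases p; cases q; simpa [Prod.ext_iff] using h)

@[simp] lemma up_apply_succ (f : ℕ × ℕ →₀ ℕ) (m c : ℕ) : up f (m + 1, c) = f (m, c) :=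
  Finsupp.embDomain_apply_self upE f (m, c)

@[simp] lemma up_apply_zero (f : ℕ × ℕ →₀ ℕ) (c : ℕ) : up f (0, c) = 0 := by
  apply Finsupp.embDomain_notin_range
  rintro ⟨⟨a, b⟩, h⟩
  simp [upE, Prod.ext_iff] at h

@[simp] lemma down_apply (g : ℕ × ℕ →₀ ℕ) (m c : ℕ) : down g (m, c) = g (m + 1, c) := rfl

lemma down_up (f : ℕ × ℕ →₀ ℕ) : down (up f) = f := by
  ext ⟨m, c⟩; simp

lemma up_down (g : ℕ × ℕ →₀ ℕ) (h0 : ∀ c, g (0, c) = 0) : up (down g) = g := by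
  ext ⟨m, c⟩
  rcases m with _ | m
  · simp [h0]
  · simp

lemma wt_add (f g : ℕ × ℕ →₀ ℕ) : wt (f + g) = wt f + wt g := by
  unfold wt
  exact Finsupp.sum_add_index' (fun p => by simp) (fun p v w => by ring)

lemma len_add (f g : ℕ × ℕ →₀ ℕ) : len (f + g) = len f + len g := by
  unfold len
  exact Finsupp.sum_add_index' (fun p => rfl) (fun p v w => rfl)

lemma wt_single (p : ℕ × ℕ) (v : ℕ) : wt (Finsupp.single p v) = p.1 * v := by
  unfold wt
  exact Finsupp.sum_single_index (by simp)

lemma len_single (p : ℕ × ℕ) (v : ℕ) : len (Finsupp.single p v) = v := by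
  unfold len
  exact Finsupp.sum_single_index rfl

lemma wt_up (f : ℕ × ℕ →₀ ℕ) : wt (up f) = wt f + len f := by
  unfold wt len up
  rw [Finsupp.sum_embDomain]
  rw [← Finsupp.sum_add]
  exact Finsupp.sum_congr fun p hp => by show (p.1 + 1) * f p = p.1 * f p + f p; ring

lemma len_up (f : ℕ × ℕ →₀ ℕ) : len (up f) = len f := by
  unfold len up
  rw [Finsupp.sum_embDomain]

lemma apply_le_len (f : ℕ × ℕ →₀ ℕ) (p : ℕ × ℕ) : f p ≤ len f := by
  by_cases h : f p = 0
  · omega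
  · exact Finset.single_le_sum (f := fun q => f q) (fun q _ => Nat.zero_le _)
      (Finsupp.mem_support_iff.2 h)

lemma pair_le_len (f : ℕ × ℕ →₀ ℕ) (p q : ℕ × ℕ) (hpq : p ≠ q) : f p + f q ≤ len f := by
  by_cases hp : f p = 0
  · rw [hp]; simpa using apply_le_len f q
  by_cases hq : f q = 0
  · rw [hq]; simpa using apply_le_len f p
  have : ({p, q} : Finset (ℕ × ℕ)) ⊆ f.support := by
    intro x hx
    rcases Finset.mem_insert.1 hx with rfl | hx
    · exact Finsupp.mem_support_iff.2 hp
    · rw [Finset.mem_singleton.1 hx]; exact Finsupp.mem_support_iff.2 hq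
  calc f p + f q = ∑ x ∈ ({p, q} : Finset (ℕ × ℕ)), f x := by
        rw [Finset.sum_pair hpq]
    _ ≤ ∑ x ∈ f.support, f x := Finset.sum_le_sum_of_subset this
    _ = len f := rfl

lemma apply_le_wt (f : ℕ × ℕ →₀ ℕ) (p : ℕ × ℕ) (hp : 1 ≤ p.1) : f p ≤ wt f := by
  by_cases h : f p = 0
  · omega
  · calc f p ≤ p.1 * f p := Nat.le_mul_of_pos_left _ hp
      _ ≤ wt f := Finset.single_le_sum (f := fun q => q.1 * f q)
          (fun q _ => Nat.zero_le _) (Finsupp.mem_support_iff.2 h)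

lemma fst_le_wt (f : ℕ × ℕ →₀ ℕ) (p : ℕ × ℕ) (hp : f p ≠ 0) : p.1 ≤ wt f := by
  calc p.1 ≤ p.1 * f p := Nat.le_mul_of_pos_right _ (Nat.pos_of_ne_zero hp)
    _ ≤ wt f := Finset.single_le_sum (f := fun q => q.1 * f q)
        (fun q _ => Nat.zero_le _) (Finsupp.mem_support_iff.2 hp)

lemma len_le_wt (f : ℕ × ℕ →₀ ℕ) (h : ∀ p ∈ f.support, 1 ≤ p.1) : len f ≤ wt f :=
  Finset.sum_le_sum fun p hp => Nat.le_mul_of_pos_left _ (h p hp)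



section Defs

variable (a k n i j : ℕ)

def kC : ℕ → ℕ := fun t => if t = 0 then a else if t = n then k - a else 0

def kDii : ℕ → ℕ := fun t => if t = 0 then a else if t = n + 1 then k - a else 0

def kDi : ℕ → ℕ := fun t =>
  (if t = 0 then i else 0) + (if t = 1 then a - i else 0) +
    (if t = n then k - a - j else 0) + (if t = n + 1 then j else 0)

def Lam (μ : ℕ × ℕ →₀ ℕ) : ℕ × ℕ →₀ ℕ :=
  up μ + Finsupp.single (1, 1) i + Finsupp.single (1, 2 * n + 1) j

def Mu (lam : ℕ × ℕ →₀ ℕ) : ℕ × ℕ →₀ ℕ :=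
  down ((lam.erase (1, 1)).erase (1, 2 * n + 1))

end Defs

section Eval

variable {a k n i j : ℕ}

lemma sum_kC (hn : 1 ≤ n) (hak : a ≤ k) : ∑ c ∈ Finset.range (n + 1), kC a k n c = k := by
  have h : ∀ c ∈ Finset.range (n + 1), kC a k n c =
      (if c = 0 then a else 0) + (if c = n then k - a else 0) := by
    intro c _
    simp only [kC]
    split_ifs <;> omega
  rw [Finset.sum_congr rfl h, Finset.sum_add_distrib,
    Finset.sum_ite_eq' (Finset.range (n + 1)) 0, Finset.sum_ite_eq' (Finset.range (n + 1)) n]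
  simp only [Finset.mem_range]
  rw [if_pos (by omega), if_pos (by omega)]
  omega

lemma sum_kDii (hn : 1 ≤ n) (hak : a ≤ k) :
    ∑ c ∈ Finset.range (n + 1 + 1), kDii a k n c = k := by
  have h : ∀ c ∈ Finset.range (n + 1 + 1), kDii a k n c =
      (if c = 0 then a else 0) + (if c = n + 1 then k - a else 0) := by
    intro c _
    simp only [kDii]
    split_ifs <;> omega
  rw [Finset.sum_congr rfl h, Finset.sum_add_distrib,
    Finset.sum_ite_eq' (Finset.range (n + 1 + 1)) 0,
    Finset.sum_ite_eq' (Finset.range (n + 1 + 1)) (n + 1)]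
  simp only [Finset.mem_range]
  rw [if_pos (by omega), if_pos (by omega)]
  omega

lemma sum_kDi (hn : 1 ≤ n) (hak : a ≤ k) (hia : i ≤ a) (hjk : j ≤ k - a) :
    ∑ c ∈ Finset.range (n + 1 + 1), kDi a k n i j c = k := by
  simp only [kDi]
  rw [Finset.sum_add_distrib, Finset.sum_add_distrib, Finset.sum_add_distrib,
    Finset.sum_ite_eq' (Finset.range (n + 1 + 1)) 0,
    Finset.sum_ite_eq' (Finset.range (n + 1 + 1)) 1,
    Finset.sum_ite_eq' (Finset.range (n + 1 + 1)) n,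
    Finset.sum_ite_eq' (Finset.range (n + 1 + 1)) (n + 1)]
  simp only [Finset.mem_range]
  rw [if_pos (by omega), if_pos (by omega), if_pos (by omega), if_pos (by omega)]
  omega

lemma fextC_nonneg (kf : ℕ → ℕ) (f : ℕ × ℕ →₀ ℕ) (z : ℤ) (hz : 0 ≤ z) (c : ℕ) :
    fextC kf f z c = f (z.toNat, c) := by
  simp only [fextC]; rw [if_neg (by omega)]

lemma fextC_neg_one (hn : 1 ≤ n) (f : ℕ × ℕ →₀ ℕ) {c : ℕ} (hc2 : c ≤ 2 * n + 1) :
    fextC (kC a k n) f (-1) c =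
      (if c = 1 then a else 0) + (if c = 2 * n + 1 then k - a else 0) := by
  simp only [fextC, kC, if_pos rfl]
  split_ifs <;> omega

lemma fextD_pos (nn : ℕ) (kf : ℕ → ℕ) (f : ℕ × ℕ →₀ ℕ) (z : ℤ) (hz : 1 ≤ z) (c : ℕ) :
    fextD nn kf f z c = f (z.toNat, c) := by
  simp only [fextD]; rw [if_neg (by omega), if_neg (by omega)]

lemma fextD_neg_one_ii (hn : 1 ≤ n) (f : ℕ × ℕ →₀ ℕ) {c : ℕ} (hc1 : 1 ≤ c)
    (hc2 : c ≤ 2 * n + 1) : fextD (n + 1) (kDii a k n) f (-1) c = 0 := by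
  simp only [fextD, kDii, if_pos rfl]
  split_ifs <;> omega

lemma fextD_zero_ii (hn : 1 ≤ n) (f : ℕ × ℕ →₀ ℕ) (c : ℕ) :
    fextD (n + 1) (kDii a k n) f 0 c =
      (if c = 1 then a else 0) + (if c = 2 * n + 1 then k - a else 0) := by
  norm_num [fextD, kDii]
  split_ifs <;> omega

lemma fextD_neg_one_i (hn : 1 ≤ n) (f : ℕ × ℕ →₀ ℕ) {c : ℕ} (hc1 : 1 ≤ c)
    (hc2 : c ≤ 2 * n + 1) : fextD (n + 1) (kDi a k n i j) f (-1) c =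
      (if c = 2 then a - i else 0) + (if c = 2 * n then k - a - j else 0) := by
  simp only [fextD, kDi, if_pos rfl]
  split_ifs <;> omega

lemma fextD_zero_i (hn : 1 ≤ n) (f : ℕ × ℕ →₀ ℕ) (c : ℕ) :
    fextD (n + 1) (kDi a k n i j) f 0 c =
      (if c = 1 then i else 0) + (if c = 2 * n + 1 then j else 0) := by
  norm_num [fextD, kDi]
  split_ifs <;> omega

end Eval

lemma abs_step (x y : ℤ) : |x - y| = 1 ↔ (x = y + 1 ∨ x = y - 1) := by
  rw [abs_eq (by norm_num : (0 : ℤ) ≤ 1)]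
  omega

lemma sum_le_of_blocks {n : ℕ} (hn : 1 ≤ n) (A B : ℕ → ℕ)
    (hM : ∀ t, 2 ≤ t → t ≤ 2 * n - 2 → A t ≤ B t)
    (hL : 2 ≤ n → A 0 + A 1 ≤ B 0 + B 1)
    (hR : 2 ≤ n → A (2 * n - 1) + A (2 * n) ≤ B (2 * n - 1) + B (2 * n))
    (h1 : n = 1 → A 0 + A 1 + A 2 ≤ B 0 + B 1 + B 2) :
    ∑ t ∈ Finset.range (2 * n + 1), A t ≤ ∑ t ∈ Finset.range (2 * n + 1), B t := by
  rcases Nat.lt_or_ge n 2 with h | h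
  · have hn1 : n = 1 := by omega
    subst hn1
    simp only [show 2 * 1 + 1 = 3 from rfl, Finset.sum_range_succ, Finset.sum_range_zero]
    have := h1 rfl
    omega
  · have key : ∀ F : ℕ → ℕ, ∑ t ∈ Finset.range (2 * n + 1), F t =
        F 0 + F 1 + (∑ t ∈ Finset.Ico 2 (2 * n - 1), F t) + F (2 * n - 1) + F (2 * n) := by
      intro F
      rw [Finset.range_eq_Ico]
      rw [← Finset.sum_Ico_consecutive F (by omega : 0 ≤ 2) (by omega : 2 ≤ 2 * n + 1)]
      rw [← Finset.sum_Ico_consecutive F (by omega : 2 ≤ 2 * n - 1) (by omega : 2 * n - 1 ≤ 2 * n + 1)]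
      have e1 : ∑ t ∈ Finset.Ico 0 2, F t = F 0 + F 1 := by
        rw [show (2 : ℕ) = 0 + 1 + 1 by omega]
        rw [Finset.sum_Ico_succ_top (by omega), Finset.sum_Ico_succ_top (by omega)]
        simp
      have e2 : ∑ t ∈ Finset.Ico (2 * n - 1) (2 * n + 1), F t = F (2 * n - 1) + F (2 * n) := by
        rw [show 2 * n + 1 = (2 * n) + 1 from rfl]
        rw [Finset.sum_Ico_succ_top (by omega), show 2 * n = (2 * n - 1) + 1 by omega]
        rw [Finset.sum_Ico_succ_top (by omega)]
        simp
      rw [e1, e2]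
      ring
    rw [key A, key B]
    have hmid : ∑ t ∈ Finset.Ico 2 (2 * n - 1), A t ≤ ∑ t ∈ Finset.Ico 2 (2 * n - 1), B t := by
      apply Finset.sum_le_sum
      intro t ht
      rw [Finset.mem_Ico] at ht
      exact hM t ht.1 (by omega)
    have := hL h
    have := hR h
    omega


end CMPP

namespace CMPP

section Apply

variable {a k n i j : ℕ}

lemma up_apply_pos (f : ℕ × ℕ →₀ ℕ) {m : ℕ} (hm : 1 ≤ m) (c : ℕ) :
    up f (m, c) = f (m - 1, c) := by
  obtain ⟨m', rfl⟩ : ∃ m', m = m' + 1 := ⟨m - 1, by omega⟩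
  simp [up_apply_succ]

lemma isCPD_level0 {nn : ℕ} {μ : ℕ × ℕ →₀ ℕ} (h : IsCPD nn μ) (c : ℕ) : μ (0, c) = 0 := by
  by_contra hne
  have := h (0, c) (Finsupp.mem_support_iff.2 hne)
  omega

lemma isCPC_level0 {nn : ℕ} {f : ℕ × ℕ →₀ ℕ} (h : IsCPC nn f) (c : ℕ) : f (0, c) = 0 := by
  by_contra hne
  have := h (0, c) (Finsupp.mem_support_iff.2 hne)
  omega

@[simp] lemma Lam_apply_zero (μ : ℕ × ℕ →₀ ℕ) (c : ℕ) : Lam n i j μ (0, c) = 0 := by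
  simp [Lam, Finsupp.single_apply, Prod.ext_iff]

lemma Lam_apply_one (hn : 1 ≤ n) (μ : ℕ × ℕ →₀ ℕ) {c : ℕ} (hμ0 : μ (0, c) = 0) :
    Lam n i j μ (1, c) = (if c = 1 then i else 0) + (if c = 2 * n + 1 then j else 0) := by
  have h1 : up μ (1, c) = 0 := by rw [up_apply_pos μ (by omega) c]; simpa using hμ0
  simp only [Lam, Finsupp.add_apply, Finsupp.single_apply, h1, zero_add]
  congr 1
  · simp [Prod.ext_iff, eq_comm]
  · simp [Prod.ext_iff, eq_comm]

lemma Lam_apply_ge2 (μ : ℕ × ℕ →₀ ℕ) {m : ℕ} (hm : 2 ≤ m) (c : ℕ) :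
    Lam n i j μ (m, c) = μ (m - 1, c) := by
  simp only [Lam, Finsupp.add_apply, Finsupp.single_apply]
  rw [if_neg (by simp [Prod.ext_iff]; omega), if_neg (by simp [Prod.ext_iff]; omega),
    up_apply_pos μ (by omega) c]
  simp

lemma Mu_apply_pos (lam : ℕ × ℕ →₀ ℕ) {m : ℕ} (hm : 1 ≤ m) (c : ℕ) :
    Mu n lam (m, c) = lam (m + 1, c) := by
  simp only [Mu, down_apply, Finsupp.erase_apply]
  rw [if_neg (by simp [Prod.ext_iff]; omega), if_neg (by simp [Prod.ext_iff]; omega)]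

lemma Mu_apply_zero_special (hn : 1 ≤ n) (lam : ℕ × ℕ →₀ ℕ) {c : ℕ} (hc : c = 1 ∨ c = 2 * n + 1) :
    Mu n lam (0, c) = 0 := by
  simp only [Mu, down_apply, Finsupp.erase_apply]
  rcases hc with rfl | rfl
  · rw [if_neg (by simp [Prod.ext_iff]; omega)]
    · simp
  · simp

lemma Mu_apply_zero_other (lam : ℕ × ℕ →₀ ℕ) {c : ℕ} (h1 : c ≠ 1) (h2 : c ≠ 2 * n + 1) :
    Mu n lam (0, c) = lam (1, c) := by
  simp only [Mu, down_apply, Finsupp.erase_apply]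
  rw [if_neg (by simp [Prod.ext_iff]; omega), if_neg (by simp [Prod.ext_iff]; omega)]

lemma Lam_Mu (hn : 1 ≤ n) (lam : ℕ × ℕ →₀ ℕ) (h0 : ∀ c, lam (0, c) = 0)
    (hone : ∀ c, c ≠ 1 → c ≠ 2 * n + 1 → lam (1, c) = 0)
    (hi : lam (1, 1) = i) (hj : lam (1, 2 * n + 1) = j) :
    Lam n i j (Mu n lam) = lam := by
  ext ⟨m, c⟩
  match m with
  | 0 => rw [Lam_apply_zero, h0]
  | 1 =>
    have hμ0 : Mu n lam (0, c) = 0 := by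
      by_cases hc : c = 1 ∨ c = 2 * n + 1
      · exact Mu_apply_zero_special hn lam hc
      · push_neg at hc
        rw [Mu_apply_zero_other lam hc.1 hc.2]
        exact hone c hc.1 hc.2
    rw [Lam_apply_one hn _ hμ0]
    by_cases hc1 : c = 1
    · subst hc1
      rw [if_pos rfl, if_neg (by omega), hi]
      omega
    · rw [if_neg hc1]
      by_cases hc2 : c = 2 * n + 1
      · subst hc2
        rw [if_pos rfl, hj]
        omega
      · rw [if_neg hc2, hone c hc1 hc2]
  | m + 2 =>
    rw [Lam_apply_ge2 _ (by omega), Mu_apply_pos _ (by omega)]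
    congr 1

lemma Mu_Lam (hn : 1 ≤ n) (μ : ℕ × ℕ →₀ ℕ) (hμ0 : ∀ c, μ (0, c) = 0) :
    Mu n (Lam n i j μ) = μ := by
  ext ⟨m, c⟩
  match m with
  | 0 =>
    by_cases hc : c = 1 ∨ c = 2 * n + 1
    · rw [Mu_apply_zero_special hn _ hc, hμ0]
    · push_neg at hc
      rw [Mu_apply_zero_other _ hc.1 hc.2, Lam_apply_one hn _ (hμ0 c),
        if_neg hc.1, if_neg hc.2, hμ0]
  | m + 1 =>
    rw [Mu_apply_pos _ (by omega), Lam_apply_ge2 _ (by omega)]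
    congr 1

lemma len_Lam (μ : ℕ × ℕ →₀ ℕ) : len (Lam n i j μ) = len μ + i + j := by
  simp [Lam, len_add, len_up, len_single]

lemma wt_Lam (μ : ℕ × ℕ →₀ ℕ) : wt (Lam n i j μ) = wt μ + len μ + i + j := by
  simp [Lam, wt_add, wt_up, wt_single]

lemma isCPC_Lam (hn : 1 ≤ n) {μ : ℕ × ℕ →₀ ℕ} (hμ : IsCPD (n + 1) μ) :
    IsCPC n (Lam n i j μ) := by
  rintro ⟨m, c⟩ hp
  rw [Finsupp.mem_support_iff] at hp
  match m with
  | 0 => rw [Lam_apply_zero] at hp; omega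
  | 1 =>
    rw [Lam_apply_one hn _ (isCPD_level0 hμ c)] at hp
    have : c = 1 ∨ c = 2 * n + 1 := by
      by_contra hc
      push_neg at hc
      rw [if_neg hc.1, if_neg hc.2] at hp
      omega
    refine ⟨by omega, by omega, by omega, by omega⟩
  | m + 2 =>
    rw [Lam_apply_ge2 _ (by omega)] at hp
    have := hμ (m + 2 - 1, c) (Finsupp.mem_support_iff.2 hp)
    simp only at this
    refine ⟨by omega, by omega, by omega, by omega⟩

lemma isCPD_Mu (hn : 1 ≤ n) {lam : ℕ × ℕ →₀ ℕ} (hlam : IsCPC n lam)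
    (hone : ∀ c, c ≠ 1 → c ≠ 2 * n + 1 → lam (1, c) = 0) :
    IsCPD (n + 1) (Mu n lam) := by
  rintro ⟨m, c⟩ hp
  rw [Finsupp.mem_support_iff] at hp
  match m with
  | 0 =>
    exfalso
    by_cases hc : c = 1 ∨ c = 2 * n + 1
    · rw [Mu_apply_zero_special hn _ hc] at hp; omega
    · push_neg at hc
      rw [Mu_apply_zero_other _ hc.1 hc.2, hone c hc.1 hc.2] at hp
      omega
  | m + 1 =>
    rw [Mu_apply_pos _ (by omega)] at hp
    have := hlam (m + 1 + 1, c) (Finsupp.mem_support_iff.2 hp)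
    simp only at this
    refine ⟨by omega, by omega, by omega, by omega⟩

end Apply

end CMPP
namespace CMPP

section Bump

variable {a k n : ℕ}

lemma bumpC (hn : 1 ≤ n) (hak : a ≤ k) {lam : ℕ × ℕ →₀ ℕ} (hC : MemC n (kC a k n) lam)
    {c₀ : ℕ} (hodd : c₀ % 2 = 1) (hc₀ : c₀ ≤ 2 * n + 1) :
    lam (1, c₀) + (if c₀ = 1 then 0 else a) + (if c₀ = 2 * n + 1 then 0 else k - a) ≤ k := by
  obtain ⟨hcp, hpath⟩ := hC
  set q : ℕ → ℤ := fun t => if t = c₀ - 1 then 1 else if t % 2 = 0 then -1 else 0 with hq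
  have hval : ∀ t, t < 2 * n + 1 → -1 ≤ q t ∧ (q t + (t : ℤ) + 1) % 2 = 0 := by
    intro t _
    simp only [hq]
    split_ifs <;> constructor <;> omega
  have hstep : ∀ t, t + 1 < 2 * n + 1 → |q (t + 1) - q t| = 1 := by
    intro t _
    rw [abs_step]
    simp only [hq]
    split_ifs <;> omega
  have hbound := hpath q hval hstep
  rw [sum_kC hn hak] at hbound
  have heval : ∀ t ∈ Finset.range (2 * n + 1),
      fextC (kC a k n) lam (q t) (t + 1) =
        (if t = c₀ - 1 then lam (1, c₀) else 0) +
          ((if t = 0 then (if c₀ = 1 then 0 else a) else 0) +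
            (if t = 2 * n then (if c₀ = 2 * n + 1 then 0 else k - a) else 0)) := by
    intro t ht
    simp only [Finset.mem_range] at ht
    by_cases h1 : t = c₀ - 1
    · subst h1
      simp only [hq, if_pos rfl]
      rw [fextC_nonneg _ _ _ (by omega)]
      have e1 : ((1 : ℤ).toNat, c₀ - 1 + 1) = (1, c₀) := by
        simp [Prod.ext_iff]; omega
      rw [e1]
      split_ifs <;> omega
    · by_cases h2 : t % 2 = 0
      · have hqval : q t = -1 := by simp only [hq]; rw [if_neg h1, if_pos h2]
        rw [hqval, fextC_neg_one hn lam (by omega : t + 1 ≤ 2 * n + 1)]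
        split_ifs <;> omega
      · have hqval : q t = 0 := by simp only [hq]; rw [if_neg h1, if_neg h2]
        rw [hqval, fextC_nonneg _ _ _ (by omega)]
        have e1 : ((0 : ℤ).toNat, t + 1) = ((0 : ℕ), t + 1) := rfl
        rw [e1, isCPC_level0 hcp]
        split_ifs <;> omega
  rw [Finset.sum_congr rfl heval, Finset.sum_add_distrib, Finset.sum_add_distrib,
    Finset.sum_ite_eq' (Finset.range (2 * n + 1)) (c₀ - 1),
    Finset.sum_ite_eq' (Finset.range (2 * n + 1)) 0,
    Finset.sum_ite_eq' (Finset.range (2 * n + 1)) (2 * n)] at hbound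
  simp only [Finset.mem_range] at hbound
  split_ifs at hbound ⊢ <;> omega

lemma forced_one_C (hn : 1 ≤ n) (hak : a ≤ k) {lam : ℕ × ℕ →₀ ℕ}
    (hC : MemC n (kC a k n) lam) :
    ∀ c, c ≠ 1 → c ≠ 2 * n + 1 → lam (1, c) = 0 := by
  intro c h1 h2
  by_contra hne
  have hsupp := hC.1 (1, c) (Finsupp.mem_support_iff.2 hne)
  simp only at hsupp
  have hodd : c % 2 = 1 := by omega
  have hc2 : c ≤ 2 * n + 1 := by omega
  have := bumpC hn hak hC hodd hc2
  rw [if_neg h1, if_neg h2] at this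
  omega

lemma bumpC_left (hn : 1 ≤ n) (hak : a ≤ k) {lam : ℕ × ℕ →₀ ℕ}
    (hC : MemC n (kC a k n) lam) : lam (1, 1) ≤ a := by
  have := bumpC hn hak hC (c₀ := 1) (by omega) (by omega)
  rw [if_pos rfl, if_neg (by omega)] at this
  omega

lemma bumpC_right (hn : 1 ≤ n) (hak : a ≤ k) {lam : ℕ × ℕ →₀ ℕ}
    (hC : MemC n (kC a k n) lam) : lam (1, 2 * n + 1) ≤ k - a := by
  have := bumpC hn hak hC (c₀ := 2 * n + 1) (by omega) (by omega)
  rw [if_neg (by omega), if_pos rfl] at this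
  omega

lemma bumpD (hn : 1 ≤ n) (hak : a ≤ k) {g : ℕ × ℕ →₀ ℕ} (hD : MemD (n + 1) (kDii a k n) g)
    {c₀ : ℕ} (heven : c₀ % 2 = 0) (hc1 : 2 ≤ c₀) (hc₀ : c₀ ≤ 2 * n) : g (1, c₀) = 0 := by
  obtain ⟨hcp, hpath⟩ := hD
  have h2n : 2 * (n + 1) - 1 = 2 * n + 1 := by omega
  rw [h2n] at hpath
  set q : ℕ → ℤ := fun t => if t = c₀ - 1 then 1 else if t % 2 = 0 then 0 else -1 with hq
  have hval : ∀ t, t < 2 * n + 1 → -1 ≤ q t ∧ (q t + (t : ℤ) + 1) % 2 = 1 := by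
    intro t _
    simp only [hq]
    split_ifs <;> constructor <;> omega
  have hstep : ∀ t, t + 1 < 2 * n + 1 → |q (t + 1) - q t| = 1 := by
    intro t _
    rw [abs_step]
    simp only [hq]
    split_ifs <;> omega
  have hbound := hpath q hval hstep
  rw [sum_kDii hn hak] at hbound
  have heval : ∀ t ∈ Finset.range (2 * n + 1),
      fextD (n + 1) (kDii a k n) g (q t) (t + 1) =
        (if t = c₀ - 1 then g (1, c₀) else 0) +
          ((if t = 0 then a else 0) + (if t = 2 * n then k - a else 0)) := by
    intro t ht
    simp only [Finset.mem_range] at ht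
    by_cases h1 : t = c₀ - 1
    · subst h1
      simp only [hq, if_pos rfl]
      rw [fextD_pos _ _ _ _ (by omega)]
      have e1 : ((1 : ℤ).toNat, c₀ - 1 + 1) = (1, c₀) := by
        simp [Prod.ext_iff]; omega
      rw [e1]
      split_ifs <;> omega
    · by_cases h2 : t % 2 = 0
      · have hqval : q t = 0 := by simp only [hq]; rw [if_neg h1, if_pos h2]
        rw [hqval, fextD_zero_ii hn]
        split_ifs <;> omega
      · have hqval : q t = -1 := by simp only [hq]; rw [if_neg h1, if_neg h2]
        rw [hqval, fextD_neg_one_ii hn g (by omega) (by omega : t + 1 ≤ 2 * n + 1)]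
        split_ifs <;> omega
  rw [Finset.sum_congr rfl heval, Finset.sum_add_distrib, Finset.sum_add_distrib,
    Finset.sum_ite_eq' (Finset.range (2 * n + 1)) (c₀ - 1),
    Finset.sum_ite_eq' (Finset.range (2 * n + 1)) 0,
    Finset.sum_ite_eq' (Finset.range (2 * n + 1)) (2 * n)] at hbound
  simp only [Finset.mem_range] at hbound
  split_ifs at hbound <;> omega

lemma forced_one_D (hn : 1 ≤ n) (hak : a ≤ k) {g : ℕ × ℕ →₀ ℕ}
    (hD : MemD (n + 1) (kDii a k n) g) : ∀ c, g (1, c) = 0 := by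
  intro c
  by_contra hne
  have hsupp := hD.1 (1, c) (Finsupp.mem_support_iff.2 hne)
  simp only at hsupp
  have heven : c % 2 = 0 := by omega
  have := bumpD hn hak hD heven (by omega) (by omega)
  omega

end Bump

end CMPP
namespace CMPP

section Transfer

variable {a k n i j : ℕ}

/-- pointwise comparison for part (ii), forward -/
lemma pt_ii_fwd (hn : 1 ≤ n) (hak : a ≤ k) (f : ℕ × ℕ →₀ ℕ) {z : ℤ} {c : ℕ}
    (hz : -1 ≤ z) (hc1 : 1 ≤ c) (hc2 : c ≤ 2 * n + 1) :
    fextD (n + 1) (kDii a k n) (up f) z c ≤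
      fextC (kC a k n) f (if z = -1 then 0 else z - 1) c := by
  rcases (show z = -1 ∨ z = 0 ∨ 1 ≤ z by omega) with h | h | h
  · rw [h, fextD_neg_one_ii hn (up f) hc1 hc2]
    exact Nat.zero_le _
  · rw [h, if_neg (by omega), show (0:ℤ) - 1 = -1 by norm_num,
      fextD_zero_ii hn, fextC_neg_one hn f hc2]
  · rw [if_neg (by omega), fextD_pos _ _ _ _ h, fextC_nonneg _ _ _ (by omega)]
    have e : z.toNat = (z - 1).toNat + 1 := by omega
    rw [e, up_apply_succ]

/-- pointwise equality for part (ii), backward -/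
lemma pt_ii_bwd (hn : 1 ≤ n) (hak : a ≤ k) (f : ℕ × ℕ →₀ ℕ) {z : ℤ} {c : ℕ}
    (hz : -1 ≤ z) (hc1 : 1 ≤ c) (hc2 : c ≤ 2 * n + 1) :
    fextC (kC a k n) f z c = fextD (n + 1) (kDii a k n) (up f) (z + 1) c := by
  rcases (show z = -1 ∨ 0 ≤ z by omega) with h | h
  · rw [h, fextC_neg_one hn f hc2]
    norm_num [fextD_zero_ii hn]
  · rw [fextC_nonneg _ _ _ h, fextD_pos _ _ _ _ (by omega)]
    have e : (z + 1).toNat = z.toNat + 1 := by omega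
    rw [e, up_apply_succ]

lemma transfer_ii_fwd (hn : 1 ≤ n) (hak : a ≤ k) {f : ℕ × ℕ →₀ ℕ}
    (hC : MemC n (kC a k n) f) : MemD (n + 1) (kDii a k n) (up f) := by
  have h2n1 : 2 * (n + 1) - 1 = 2 * n + 1 := by omega
  constructor
  · -- IsCPD
    rintro ⟨m, c⟩ hp
    rw [Finsupp.mem_support_iff] at hp
    match m with
    | 0 => rw [up_apply_zero] at hp; omega
    | m + 1 =>
      rw [up_apply_pos _ (by omega)] at hp
      have e : m + 1 - 1 = m := rfl
      rw [e] at hp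
      have := hC.1 (m, c) (Finsupp.mem_support_iff.2 hp)
      simp only at this
      exact ⟨by omega, by omega, by omega, by omega⟩
  · rw [h2n1, sum_kDii hn hak]
    intro p hval hstep
    set q : ℕ → ℤ := fun t => if p t = -1 then 0 else p t - 1 with hqdef
    have hqval : ∀ t, t < 2 * n + 1 → -1 ≤ q t ∧ (q t + (t : ℤ) + 1) % 2 = 0 := by
      intro t ht
      obtain ⟨h1, h2⟩ := hval t ht
      simp only [hqdef]
      split_ifs <;> constructor <;> omega
    have hqstep : ∀ t, t + 1 < 2 * n + 1 → |q (t + 1) - q t| = 1 := by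
      intro t ht
      have h1 := (hval t (by omega)).1
      have h2 := (hval (t + 1) ht).1
      have h3 := hstep t ht
      rw [abs_step] at h3 ⊢
      simp only [hqdef]
      split_ifs <;> omega
    have hbound := hC.2 q hqval hqstep
    rw [sum_kC hn hak] at hbound
    refine le_trans (Finset.sum_le_sum ?_) hbound
    intro t ht
    simp only [Finset.mem_range] at ht
    have h1 := (hval t ht).1
    exact pt_ii_fwd hn hak f h1 (by omega) (by omega)

lemma transfer_ii_bwd (hn : 1 ≤ n) (hak : a ≤ k) {f : ℕ × ℕ →₀ ℕ} (hfC : IsCPC n f)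
    (hD : MemD (n + 1) (kDii a k n) (up f)) : MemC n (kC a k n) f := by
  have h2n1 : 2 * (n + 1) - 1 = 2 * n + 1 := by omega
  refine ⟨hfC, ?_⟩
  intro q hqval hqstep
  have hpath := hD.2
  rw [h2n1, sum_kDii hn hak] at hpath
  rw [sum_kC hn hak]
  set p : ℕ → ℤ := fun t => q t + 1 with hpdef
  have hpval : ∀ t, t < 2 * n + 1 → -1 ≤ p t ∧ (p t + (t : ℤ) + 1) % 2 = 1 := by
    intro t ht
    obtain ⟨h1, h2⟩ := hqval t ht
    simp only [hpdef]
    constructor <;> omega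
  have hpstep : ∀ t, t + 1 < 2 * n + 1 → |p (t + 1) - p t| = 1 := by
    intro t ht
    have h3 := hqstep t ht
    rw [abs_step] at h3 ⊢
    simp only [hpdef]
    omega
  have hbound := hpath p hpval hpstep
  refine le_trans (le_of_eq (Finset.sum_congr rfl ?_)) hbound
  intro t ht
  simp only [Finset.mem_range] at ht
  have h1 := (hqval t ht).1
  exact pt_ii_bwd hn hak f h1 (by omega) (by omega)

end Transfer

end CMPP
namespace CMPP

section TransferI

variable {a k n i j : ℕ}

/-- pointwise comparison for part (i), `μ → Λ` direction -/
lemma pt_i (hn : 1 ≤ n) {μ : ℕ × ℕ →₀ ℕ} (hD1 : IsCPD (n + 1) μ) {z : ℤ} {c : ℕ}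
    (hz : -1 ≤ z) (hc1 : 1 ≤ c) (hc2 : c ≤ 2 * n + 1)
    (hz' : z = -1 → c ≠ 1 ∧ c ≠ 2 * n + 1) :
    fextC (kC a k n) (Lam n i j μ) z c ≤
      fextD (n + 1) (kDi a k n i j) μ (if z = -1 then 0 else z - 1) c := by
  rcases (show z = -1 ∨ z = 0 ∨ z = 1 ∨ 2 ≤ z by omega) with h | h | h | h
  · rw [h, if_pos rfl, fextC_neg_one hn _ hc2, if_neg (hz' h).1, if_neg (hz' h).2]
    exact Nat.zero_le _
  · rw [h, if_neg (by omega), fextC_nonneg _ _ _ (by omega)]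
    have e : ((0 : ℤ).toNat, c) = ((0 : ℕ), c) := rfl
    rw [e, Lam_apply_zero]
    exact Nat.zero_le _
  · rw [h, if_neg (by omega), fextC_nonneg _ _ _ (by omega),
      show (1 : ℤ) - 1 = 0 by norm_num]
    have e : ((1 : ℤ).toNat, c) = ((1 : ℕ), c) := rfl
    rw [e, Lam_apply_one hn _ (isCPD_level0 hD1 c), fextD_zero_i hn]
  · rw [if_neg (by omega), fextC_nonneg _ _ _ (by omega),
      fextD_pos _ _ _ _ (by omega), Lam_apply_ge2 _ (by omega)]
    have e : (z - 1).toNat = z.toNat - 1 := by omega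
    rw [e]

/-- pointwise comparison for part (i), `Λ → μ` direction -/
lemma pt_if (hn : 1 ≤ n) {lam : ℕ × ℕ →₀ ℕ}
    (h0 : ∀ c, lam (0, c) = 0) (hi : lam (1, 1) = i) (hj : lam (1, 2 * n + 1) = j)
    {z : ℤ} {c : ℕ} (hz : -1 ≤ z) (hc1 : 1 ≤ c) (hc2 : c ≤ 2 * n + 1)
    (hz' : z = -1 → c ≠ 2 ∧ c ≠ 2 * n) :
    fextD (n + 1) (kDi a k n i j) (Mu n lam) z c ≤ fextC (kC a k n) lam (z + 1) c := by
  rcases (show z = -1 ∨ z = 0 ∨ 1 ≤ z by omega) with h | h | h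
  · rw [h, fextD_neg_one_i hn _ hc1 hc2, if_neg (hz' h).1, if_neg (hz' h).2]
    exact Nat.zero_le _
  · rw [h, fextD_zero_i hn, show (0 : ℤ) + 1 = 1 by norm_num,
      fextC_nonneg _ _ _ (by omega)]
    have e : ((1 : ℤ).toNat, c) = ((1 : ℕ), c) := rfl
    rw [e]
    by_cases h1 : c = 1
    · subst h1; rw [if_pos rfl, if_neg (by omega), hi]; omega
    · rw [if_neg h1]
      by_cases h2 : c = 2 * n + 1
      · subst h2; rw [if_pos rfl, hj]; omega
      · rw [if_neg h2]; omega
  · rw [fextD_pos _ _ _ _ h, fextC_nonneg _ _ _ (by omega),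
      Mu_apply_pos _ (by omega)]
    have e : ((z + 1).toNat, c) = (z.toNat + 1, c) := by simp [Prod.ext_iff]; omega
    rw [e]

lemma transfer_i_bwd (hn : 1 ≤ n) (hak : a ≤ k) (hia : i ≤ a) (hjk : j ≤ k - a)
    {μ : ℕ × ℕ →₀ ℕ} (hD : MemD (n + 1) (kDi a k n i j) μ) :
    MemC n (kC a k n) (Lam n i j μ) := by
  have h2n1 : 2 * (n + 1) - 1 = 2 * n + 1 := by omega
  refine ⟨isCPC_Lam hn hD.1, ?_⟩
  intro q hqval hqstep
  have hpath := hD.2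
  rw [h2n1, sum_kDi hn hak hia hjk] at hpath
  rw [sum_kC hn hak]
  set p : ℕ → ℤ := fun t => if q t = -1 then 0 else q t - 1 with hpdef
  have hpval : ∀ t, t < 2 * n + 1 → -1 ≤ p t ∧ (p t + (t : ℤ) + 1) % 2 = 1 := by
    intro t ht
    obtain ⟨h1, h2⟩ := hqval t ht
    simp only [hpdef]
    split_ifs <;> constructor <;> omega
  have hpstep : ∀ t, t + 1 < 2 * n + 1 → |p (t + 1) - p t| = 1 := by
    intro t ht
    have h1 := (hqval t (by omega)).1
    have h2 := (hqval (t + 1) ht).1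
    have h3 := hqstep t ht
    rw [abs_step] at h3 ⊢
    simp only [hpdef]
    split_ifs <;> omega
  have hbound := hpath p hpval hpstep
  refine le_trans (sum_le_of_blocks hn _ _ ?hM ?hL ?hR ?h1) hbound
  case hM =>
    intro t h2t ht2
    have hv := (hqval t (by omega)).1
    simp only [hpdef]
    exact pt_i hn hD.1 hv (by omega) (by omega) (fun _ => ⟨by omega, by omega⟩)
  case hL =>
    intro hn2
    have hv0 := hqval 0 (by omega)
    have hv1 := hqval 1 (by omega)
    show fextC (kC a k n) (Lam n i j μ) (q 0) 1 + fextC (kC a k n) (Lam n i j μ) (q 1) 2 ≤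
      fextD (n + 1) (kDi a k n i j) μ (p 0) 1 + fextD (n + 1) (kDi a k n i j) μ (p 1) 2
    by_cases hq0 : q 0 = -1
    · have h3 := hqstep 0 (by omega)
      rw [abs_step] at h3
      norm_num at h3
      have hq1 : q 1 = 0 := by omega
      have hp0 : p 0 = 0 := by simp only [hpdef]; rw [if_pos hq0]
      have hp1 : p 1 = -1 := by simp only [hpdef]; rw [if_neg (by omega), hq1]; norm_num
      rw [hq0, hq1, hp0, hp1, fextC_neg_one hn _ (by omega),
        fextC_nonneg _ _ _ (by omega), fextD_zero_i hn,
        fextD_neg_one_i hn _ (by omega) (by omega)]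
      have e : ((0 : ℤ).toNat, (2 : ℕ)) = ((0 : ℕ), 2) := rfl
      rw [e, Lam_apply_zero]
      split_ifs <;> omega
    · have hA0 := pt_i (a := a) (k := k) (i := i) (j := j) (c := 1) hn hD.1 hv0.1
        (by omega) (by omega) (fun h => absurd h hq0)
      have hA1 := pt_i (a := a) (k := k) (i := i) (j := j) (c := 2) hn hD.1 hv1.1
        (by omega) (by omega) (fun _ => ⟨by omega, by omega⟩)
      simp only [hpdef]
      omega
  case hR =>
    intro hn2
    have hv0 := hqval (2 * n - 1) (by omega)
    have hv1 := hqval (2 * n) (by omega)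
    show fextC (kC a k n) (Lam n i j μ) (q (2 * n - 1)) (2 * n - 1 + 1) +
        fextC (kC a k n) (Lam n i j μ) (q (2 * n)) (2 * n + 1) ≤
      fextD (n + 1) (kDi a k n i j) μ (p (2 * n - 1)) (2 * n - 1 + 1) +
        fextD (n + 1) (kDi a k n i j) μ (p (2 * n)) (2 * n + 1)
    rw [show 2 * n - 1 + 1 = 2 * n from by omega]
    by_cases hq0 : q (2 * n) = -1
    · have h3 := hqstep (2 * n - 1) (by omega)
      rw [abs_step] at h3
      rw [show 2 * n - 1 + 1 = 2 * n from by omega] at h3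
      have hq1 : q (2 * n - 1) = 0 := by omega
      have hp1 : p (2 * n) = 0 := by simp only [hpdef]; rw [if_pos hq0]
      have hp0 : p (2 * n - 1) = -1 := by
        simp only [hpdef]; rw [if_neg (by omega), hq1]; norm_num
      rw [hq0, hq1, hp0, hp1, fextC_neg_one hn _ (by omega),
        fextC_nonneg _ _ _ (by omega), fextD_zero_i hn,
        fextD_neg_one_i hn _ (by omega) (by omega)]
      have e : ((0 : ℤ).toNat, 2 * n) = ((0 : ℕ), 2 * n) := rfl
      rw [e, Lam_apply_zero]
      split_ifs <;> omega
    · have hA0 := pt_i (a := a) (k := k) (i := i) (j := j) (c := 2 * n) hn hD.1 hv0.1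
        (by omega) (by omega) (fun _ => ⟨by omega, by omega⟩)
      have hA1 := pt_i (a := a) (k := k) (i := i) (j := j) (c := 2 * n + 1) hn hD.1 hv1.1
        (by omega) (by omega) (fun h => absurd h hq0)
      simp only [hpdef]
      omega
  case h1 =>
    intro hn1
    subst hn1
    have hv0 := hqval 0 (by omega)
    have hv1 := hqval 1 (by omega)
    have hv2 := hqval 2 (by omega)
    have hstep0 := hqstep 0 (by omega)
    have hstep1 := hqstep 1 (by omega)
    rw [abs_step] at hstep0 hstep1
    norm_num at hstep0 hstep1
    show fextC (kC a k 1) (Lam 1 i j μ) (q 0) 1 + fextC (kC a k 1) (Lam 1 i j μ) (q 1) 2 +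
        fextC (kC a k 1) (Lam 1 i j μ) (q 2) 3 ≤
      fextD (1 + 1) (kDi a k 1 i j) μ (p 0) 1 + fextD (1 + 1) (kDi a k 1 i j) μ (p 1) 2 +
        fextD (1 + 1) (kDi a k 1 i j) μ (p 2) 3
    have hn' : 1 ≤ 1 := le_refl 1
    by_cases hq0 : q 0 = -1
    · have hq1 : q 1 = 0 := by omega
      have hp0 : p 0 = 0 := by simp only [hpdef]; rw [if_pos hq0]
      have hp1 : p 1 = -1 := by simp only [hpdef]; rw [if_neg (by omega), hq1]; norm_num
      have hA01 : fextC (kC a k 1) (Lam 1 i j μ) (q 0) 1 +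
          fextC (kC a k 1) (Lam 1 i j μ) (q 1) 2 = a := by
        rw [hq0, hq1, fextC_neg_one hn' _ (by omega), fextC_nonneg _ _ _ (by omega)]
        have e : ((0 : ℤ).toNat, (2 : ℕ)) = ((0 : ℕ), 2) := rfl
        rw [e, Lam_apply_zero]
        split_ifs <;> omega
      have hB01 : i + (a - i) + (k - a - j) ≤ fextD (1 + 1) (kDi a k 1 i j) μ (p 0) 1 +
          fextD (1 + 1) (kDi a k 1 i j) μ (p 1) 2 := by
        rw [hp0, hp1, fextD_zero_i hn', fextD_neg_one_i hn' _ (by omega) (by omega)]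
        split_ifs <;> omega
      by_cases hq2 : q 2 = -1
      · have hp2 : p 2 = 0 := by simp only [hpdef]; rw [if_pos hq2]
        have hA2 : fextC (kC a k 1) (Lam 1 i j μ) (q 2) 3 = k - a := by
          rw [hq2, fextC_neg_one hn' _ (by omega)]
          split_ifs <;> omega
        have hB2 : j ≤ fextD (1 + 1) (kDi a k 1 i j) μ (p 2) 3 := by
          rw [hp2, fextD_zero_i hn']
          split_ifs <;> omega
        omega
      · have hq2' : q 2 = 1 := by omega
        have hA2 : fextC (kC a k 1) (Lam 1 i j μ) (q 2) 3 = j := by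
          rw [hq2', fextC_nonneg _ _ _ (by omega)]
          have e : ((1 : ℤ).toNat, (3 : ℕ)) = ((1 : ℕ), 3) := rfl
          rw [e, Lam_apply_one hn' _ (isCPD_level0 hD.1 3)]
          split_ifs <;> omega
        have hB2 : j ≤ fextD (1 + 1) (kDi a k 1 i j) μ (p 2) 3 := by
          have hp2 : p 2 = 0 := by
            simp only [hpdef]; rw [if_neg (by omega), hq2']; norm_num
          rw [hp2, fextD_zero_i hn']
          split_ifs <;> omega
        omega
    · by_cases hq2 : q 2 = -1
      · have hq1 : q 1 = 0 := by omega
        have hq0' : q 0 = 1 := by omega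
        have hA0 : fextC (kC a k 1) (Lam 1 i j μ) (q 0) 1 = i := by
          rw [hq0', fextC_nonneg _ _ _ (by omega)]
          have e : ((1 : ℤ).toNat, (1 : ℕ)) = ((1 : ℕ), 1) := rfl
          rw [e, Lam_apply_one hn' _ (isCPD_level0 hD.1 1)]
          split_ifs <;> omega
        have hA1 : fextC (kC a k 1) (Lam 1 i j μ) (q 1) 2 = 0 := by
          rw [hq1, fextC_nonneg _ _ _ (by omega)]
          have e : ((0 : ℤ).toNat, (2 : ℕ)) = ((0 : ℕ), 2) := rfl
          rw [e, Lam_apply_zero]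
        have hA2 : fextC (kC a k 1) (Lam 1 i j μ) (q 2) 3 = k - a := by
          rw [hq2, fextC_neg_one hn' _ (by omega)]
          split_ifs <;> omega
        have hB0 : i ≤ fextD (1 + 1) (kDi a k 1 i j) μ (p 0) 1 := by
          have hp0 : p 0 = 0 := by
            simp only [hpdef]; rw [if_neg (by omega), hq0']; norm_num
          rw [hp0, fextD_zero_i hn']
          split_ifs <;> omega
        have hB1 : (a - i) + (k - a - j) ≤ fextD (1 + 1) (kDi a k 1 i j) μ (p 1) 2 := by
          have hp1 : p 1 = -1 := by
            simp only [hpdef]; rw [if_neg (by omega), hq1]; norm_num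
          rw [hp1, fextD_neg_one_i hn' _ (by omega) (by omega)]
          split_ifs <;> omega
        have hB2 : j ≤ fextD (1 + 1) (kDi a k 1 i j) μ (p 2) 3 := by
          have hp2 : p 2 = 0 := by simp only [hpdef]; rw [if_pos hq2]
          rw [hp2, fextD_zero_i hn']
          split_ifs <;> omega
        omega
      · have hA0 := pt_i (a := a) (k := k) (i := i) (j := j) (c := 1) hn' hD.1 hv0.1
          (by omega) (by omega) (fun h => absurd h hq0)
        have hA1 := pt_i (a := a) (k := k) (i := i) (j := j) (c := 2) hn' hD.1 hv1.1
          (by omega) (by omega) (fun _ => ⟨by omega, by omega⟩)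
        have hA2 := pt_i (a := a) (k := k) (i := i) (j := j) (c := 3) hn' hD.1 hv2.1
          (by omega) (by omega) (fun h => absurd h hq2)
        simp only [hpdef]
        omega

end TransferI

end CMPP
namespace CMPP

section TransferIF

variable {a k n i j : ℕ}

lemma transfer_i_fwd (hn : 1 ≤ n) (hak : a ≤ k) {lam : ℕ × ℕ →₀ ℕ}
    (hC : MemC n (kC a k n) lam) (hi : lam (1, 1) = i) (hj : lam (1, 2 * n + 1) = j) :
    MemD (n + 1) (kDi a k n i j) (Mu n lam) := by
  have h2n1 : 2 * (n + 1) - 1 = 2 * n + 1 := by omega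
  have hone := forced_one_C hn hak hC
  have h0 : ∀ c, lam (0, c) = 0 := fun c => isCPC_level0 hC.1 c
  have hia : i ≤ a := hi ▸ bumpC_left hn hak hC
  have hjk : j ≤ k - a := hj ▸ bumpC_right hn hak hC
  refine ⟨isCPD_Mu hn hC.1 hone, ?_⟩
  rw [h2n1, sum_kDi hn hak hia hjk]
  intro p hpval hpstep
  set q : ℕ → ℤ := fun t =>
    if (t = 0 ∧ p 1 = -1) ∨ (t = 2 * n ∧ p (2 * n - 1) = -1) then -1 else p t + 1 with hqdef
  have hqmid : ∀ t, t ≠ 0 → t ≠ 2 * n → q t = p t + 1 := by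
    intro t h1 h2
    simp only [hqdef]
    rw [if_neg (by rintro (⟨rfl, _⟩ | ⟨rfl, _⟩) <;> omega)]
  have hq0' : p 1 ≠ -1 → q 0 = p 0 + 1 := by
    intro h
    simp only [hqdef]
    rw [if_neg ?_]
    rintro (⟨_, hh⟩ | ⟨hz, _⟩)
    · exact h hh
    · omega
  have hq0'' : p 1 = -1 → q 0 = -1 := by
    intro h
    simp [hqdef, h]
  have hq2n' : p (2 * n - 1) ≠ -1 → q (2 * n) = p (2 * n) + 1 := by
    intro h
    simp only [hqdef]
    rw [if_neg ?_]
    rintro (⟨hz, _⟩ | ⟨_, hh⟩)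
    · omega
    · exact h hh
  have hq2n'' : p (2 * n - 1) = -1 → q (2 * n) = -1 := by
    intro h
    simp [hqdef, h]
  have hqval : ∀ t, t < 2 * n + 1 → -1 ≤ q t ∧ (q t + (t : ℤ) + 1) % 2 = 0 := by
    intro t ht
    obtain ⟨h1, h2⟩ := hpval t ht
    simp only [hqdef]
    split_ifs with hcon
    · rcases hcon with ⟨rfl, _⟩ | ⟨rfl, _⟩ <;> constructor <;> omega
    · constructor <;> omega
  have hqstep : ∀ t, t + 1 < 2 * n + 1 → |q (t + 1) - q t| = 1 := by
    intro t ht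
    have hs := hpstep t ht
    rw [abs_step] at hs ⊢
    rcases eq_or_ne t 0 with rfl | ht0
    · have hq1 : q (0 + 1) = p (0 + 1) + 1 := hqmid (0 + 1) (by omega) (by omega)
      by_cases hp1 : p 1 = -1
      · rw [hq1, hq0'' hp1]
        have e : p (0 + 1) = p 1 := rfl
        omega
      · rw [hq1, hq0' hp1]
        omega
    · rcases eq_or_ne (t + 1) (2 * n) with he | hne
      · obtain rfl : t = 2 * n - 1 := by omega
        have hqt : q (2 * n - 1) = p (2 * n - 1) + 1 := hqmid _ (by omega) (by omega)
        rw [show 2 * n - 1 + 1 = 2 * n from by omega]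
        by_cases hp2 : p (2 * n - 1) = -1
        · rw [hq2n'' hp2, hqt]
          omega
        · rw [hq2n' hp2, hqt]
          have e : 2 * n - 1 + 1 = 2 * n := by omega
          rw [e] at hs
          omega
      · rw [hqmid t ht0 (by omega), hqmid (t + 1) (by omega) hne]
        omega
  have hbound := hC.2 q hqval hqstep
  rw [sum_kC hn hak] at hbound
  refine le_trans (sum_le_of_blocks hn _ _ ?hM ?hL ?hR ?h1) hbound
  case hM =>
    intro t h2t ht2
    rw [hqmid t (by omega) (by omega)]
    exact pt_if hn h0 hi hj (hpval t (by omega)).1 (by omega) (by omega)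
      (fun _ => ⟨by omega, by omega⟩)
  case hL =>
    intro hn2
    show fextD (n + 1) (kDi a k n i j) (Mu n lam) (p 0) 1 +
        fextD (n + 1) (kDi a k n i j) (Mu n lam) (p 1) 2 ≤
      fextC (kC a k n) lam (q 0) 1 + fextC (kC a k n) lam (q 1) 2
    by_cases hp1 : p 1 = -1
    · have hs := hpstep 0 (by omega)
      rw [abs_step] at hs
      norm_num at hs
      have hpar := (hpval 0 (by omega)).2
      have hge := (hpval 0 (by omega)).1
      have hp0 : p 0 = 0 := by omega
      have hq1 : q 1 = 0 := by rw [hqmid 1 (by omega) (by omega), hp1]; norm_num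
      have hq0 : q 0 = -1 := hq0'' hp1
      rw [hp0, hp1, hq0, hq1, fextD_zero_i hn, fextD_neg_one_i hn _ (by omega) (by omega),
        fextC_neg_one hn _ (by omega), fextC_nonneg _ _ _ (by omega)]
      have e : ((0 : ℤ).toNat, (2 : ℕ)) = ((0 : ℕ), 2) := rfl
      rw [e, h0 2]
      split_ifs <;> omega
    · rw [hq0' hp1, hqmid 1 (by omega) (by omega)]
      have hB0 := pt_if (a := a) (k := k) (c := 1) hn h0 hi hj (hpval 0 (by omega)).1
        (by omega) (by omega) (fun _ => ⟨by omega, by omega⟩)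
      have hB1 := pt_if (a := a) (k := k) (c := 2) hn h0 hi hj (hpval 1 (by omega)).1
        (by omega) (by omega) (fun h => absurd h hp1)
      omega
  case hR =>
    intro hn2
    show fextD (n + 1) (kDi a k n i j) (Mu n lam) (p (2 * n - 1)) (2 * n - 1 + 1) +
        fextD (n + 1) (kDi a k n i j) (Mu n lam) (p (2 * n)) (2 * n + 1) ≤
      fextC (kC a k n) lam (q (2 * n - 1)) (2 * n - 1 + 1) +
        fextC (kC a k n) lam (q (2 * n)) (2 * n + 1)
    rw [show 2 * n - 1 + 1 = 2 * n from by omega]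
    by_cases hp2 : p (2 * n - 1) = -1
    · have hs := hpstep (2 * n - 1) (by omega)
      rw [abs_step] at hs
      rw [show 2 * n - 1 + 1 = 2 * n from by omega] at hs
      have hpar := (hpval (2 * n) (by omega)).2
      have hge := (hpval (2 * n) (by omega)).1
      have hp0 : p (2 * n) = 0 := by omega
      have hq1 : q (2 * n - 1) = 0 := by
        rw [hqmid (2 * n - 1) (by omega) (by omega), hp2]; norm_num
      have hq0 : q (2 * n) = -1 := hq2n'' hp2
      rw [hp0, hp2, hq0, hq1, fextD_zero_i hn, fextD_neg_one_i hn _ (by omega) (by omega),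
        fextC_neg_one hn _ (by omega), fextC_nonneg _ _ _ (by omega)]
      have e : ((0 : ℤ).toNat, 2 * n) = ((0 : ℕ), 2 * n) := rfl
      rw [e, h0 (2 * n)]
      split_ifs <;> omega
    · rw [hq2n' hp2, hqmid (2 * n - 1) (by omega) (by omega)]
      have hB0 := pt_if (a := a) (k := k) (c := 2 * n) hn h0 hi hj
        (hpval (2 * n - 1) (by omega)).1 (by omega) (by omega) (fun h => absurd h hp2)
      have hB1 := pt_if (a := a) (k := k) (c := 2 * n + 1) hn h0 hi hj
        (hpval (2 * n) (by omega)).1 (by omega) (by omega)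
        (fun _ => ⟨by omega, by omega⟩)
      omega
  case h1 =>
    intro hn1
    subst hn1
    have hn' : 1 ≤ 1 := le_refl 1
    show fextD (1 + 1) (kDi a k 1 i j) (Mu 1 lam) (p 0) 1 +
        fextD (1 + 1) (kDi a k 1 i j) (Mu 1 lam) (p 1) 2 +
        fextD (1 + 1) (kDi a k 1 i j) (Mu 1 lam) (p 2) 3 ≤
      fextC (kC a k 1) lam (q 0) 1 + fextC (kC a k 1) lam (q 1) 2 +
        fextC (kC a k 1) lam (q 2) 3
    have e21 : 2 * 1 - 1 = 1 := rfl
    by_cases hp1 : p 1 = -1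
    · have hs0 := hpstep 0 (by omega)
      have hs1 := hpstep 1 (by omega)
      rw [abs_step] at hs0 hs1
      norm_num at hs0 hs1
      have hpar0 := (hpval 0 (by omega)).2
      have hge0 := (hpval 0 (by omega)).1
      have hpar2 := (hpval 2 (by omega)).2
      have hge2 := (hpval 2 (by omega)).1
      have hp0 : p 0 = 0 := by omega
      have hp2v : p 2 = 0 := by omega
      have hq0 : q 0 = -1 := hq0'' hp1
      have hq2 : q 2 = -1 := by
        have := hq2n'' (by rw [show 2 * 1 - 1 = 1 from rfl]; exact hp1)
        rw [show 2 * 1 = 2 from rfl] at this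
        exact this
      have hq1 : q 1 = 0 := by rw [hqmid 1 (by omega) (by omega), hp1]; norm_num
      rw [hp0, hp1, hp2v, hq0, hq1, hq2, fextD_zero_i hn', fextD_zero_i hn',
        fextD_neg_one_i hn' _ (by omega) (by omega), fextC_neg_one hn' _ (by omega),
        fextC_neg_one hn' _ (by omega), fextC_nonneg _ _ _ (by omega)]
      have e : ((0 : ℤ).toNat, (2 : ℕ)) = ((0 : ℕ), 2) := rfl
      rw [e, h0 2]
      split_ifs <;> omega
    · have hq0 : q 0 = p 0 + 1 := hq0' hp1
      have hq1 : q 1 = p 1 + 1 := hqmid 1 (by omega) (by omega)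
      have hq2 : q 2 = p 2 + 1 := by
        have := hq2n' (by rw [show 2 * 1 - 1 = 1 from rfl]; exact hp1)
        rw [show 2 * 1 = 2 from rfl] at this
        exact this
      rw [hq0, hq1, hq2]
      have hB0 := pt_if (a := a) (k := k) (c := 1) hn' h0 hi hj (hpval 0 (by omega)).1
        (by omega) (by omega) (fun _ => ⟨by omega, by omega⟩)
      have hB1 := pt_if (a := a) (k := k) (c := 2) hn' h0 hi hj (hpval 1 (by omega)).1
        (by omega) (by omega) (fun h => absurd h hp1)
      have hB2 := pt_if (a := a) (k := k) (c := 3) hn' h0 hi hj (hpval 2 (by omega)).1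
        (by omega) (by omega) (fun _ => ⟨by omega, by omega⟩)
      omega

end TransferIF

end CMPP
namespace CMPP

section Card

variable {a k n i j : ℕ}

lemma finite_aux (N M : ℕ) (P : (ℕ × ℕ →₀ ℕ) → Prop)
    (hP : ∀ f, P f → wt f = N ∧ ∀ p ∈ f.support, 1 ≤ p.1 ∧ p.2 ≤ M) :
    Finite {f : ℕ × ℕ →₀ ℕ // P f} := by
  classical
  let S := Finset.range (N + 1) ×ˢ Finset.range (M + 1)
  have hbd : ∀ (f : {f : ℕ × ℕ →₀ ℕ // P f}) (p : ℕ × ℕ), f.1 p < N + 1 := by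
    intro f p
    by_cases h : f.1 p = 0
    · omega
    · have h1 := (hP f.1 f.2).2 p (Finsupp.mem_support_iff.2 h)
      have h2 := apply_le_wt f.1 p h1.1
      have h3 := (hP f.1 f.2).1
      omega
  have hsupp : ∀ (f : {f : ℕ × ℕ →₀ ℕ // P f}) (p : ℕ × ℕ), f.1 p ≠ 0 → p ∈ S := by
    intro f p h
    have h1 := (hP f.1 f.2).2 p (Finsupp.mem_support_iff.2 h)
    have h2 := fst_le_wt f.1 p h
    have h3 := (hP f.1 f.2).1
    simp only [S, Finset.mem_product, Finset.mem_range]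
    omega
  apply Finite.of_injective (fun f : {f : ℕ × ℕ →₀ ℕ // P f} =>
    fun p : ↑S => (⟨f.1 p.1, hbd f p.1⟩ : Fin (N + 1)))
  intro f g hfg
  apply Subtype.ext
  ext p
  by_cases hp : p ∈ S
  · have := congrFun hfg ⟨p, hp⟩
    simpa [Fin.ext_iff] using this
  · by_cases h1 : f.1 p = 0
    · by_cases h2 : g.1 p = 0
      · rw [h1, h2]
      · exact absurd (hsupp g p h2) hp
    · exact absurd (hsupp f p h1) hp

lemma nat_card_sigma_fin {ι : Type*} [Fintype ι] (β : ι → Type*) [∀ x, Finite (β x)] :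
    Nat.card ((x : ι) × β x) = ∑ x, Nat.card (β x) := by
  have : ∀ x, Fintype (β x) := fun x => Fintype.ofFinite _
  rw [Nat.card_eq_fintype_card, Fintype.card_sigma]
  exact Finset.sum_congr rfl fun x _ => (Nat.card_eq_fintype_card).symm

lemma card_split (hn : 1 ≤ n) (P : (ℕ × ℕ →₀ ℕ) → Prop) (hfin : Finite {f // P f})
    (hb : ∀ f, P f → f (1, 1) ≤ a ∧ f (1, 2 * n + 1) ≤ k - a) :
    Nat.card {f // P f} = ∑ x ∈ Finset.range (a + 1), ∑ y ∈ Finset.range (k - a + 1),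
      Nat.card {f // P f ∧ f (1, 1) = x ∧ f (1, 2 * n + 1) = y} := by
  classical
  let S := Finset.range (a + 1) ×ˢ Finset.range (k - a + 1)
  let F : {f // P f} → ↑S := fun f => ⟨(f.1 (1, 1), f.1 (1, 2 * n + 1)), by
    simp only [S, Finset.mem_product, Finset.mem_range]
    have := hb f.1 f.2
    omega⟩
  have e1 : Nat.card {f // P f} = Nat.card ((s : ↑S) × {f : {f // P f} // F f = s}) :=
    Nat.card_congr (Equiv.sigmaFiberEquiv F).symm
  rw [e1, nat_card_sigma_fin]
  have e2 : ∀ s : ↑S, Nat.card {f : {f // P f} // F f = s} =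
      Nat.card {f // P f ∧ f (1, 1) = (s : ℕ × ℕ).1 ∧ f (1, 2 * n + 1) = (s : ℕ × ℕ).2} := by
    intro s
    apply Nat.card_congr
    have key : ∀ x : {f : {f // P f} // F f = s},
        x.1.1 (1, 1) = (s : ℕ × ℕ).1 ∧ x.1.1 (1, 2 * n + 1) = (s : ℕ × ℕ).2 := by
      intro x
      have h := congrArg Subtype.val x.2
      simp only [F] at h
      exact ⟨congrArg Prod.fst h, congrArg Prod.snd h⟩
    refine ⟨fun x => ⟨x.1.1, x.1.2, (key x).1, (key x).2⟩,
      fun y => ⟨⟨y.1, y.2.1⟩, ?_⟩, fun x => Subtype.ext (Subtype.ext rfl), fun y => rfl⟩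
    apply Subtype.ext
    simp only [F]
    rw [Prod.ext_iff]
    exact ⟨y.2.2.1, y.2.2.2⟩
  rw [Finset.sum_congr rfl fun s _ => e2 s]
  rw [Finset.sum_coe_sort (s := S) (f := fun y : ℕ × ℕ => Nat.card
    {f // P f ∧ f (1, 1) = y.1 ∧ f (1, 2 * n + 1) = y.2})]
  exact Finset.sum_product (Finset.range (a + 1)) (Finset.range (k - a + 1))
    (fun y => Nat.card {f // P f ∧ f (1, 1) = y.1 ∧ f (1, 2 * n + 1) = y.2})

lemma card_ii_eq (hn : 1 ≤ n) (hak : a ≤ k) (l N : ℕ) (hlN : l ≤ N) :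
    Nat.card {g : ℕ × ℕ →₀ ℕ // MemD (n + 1) (kDii a k n) g ∧ len g = l ∧ wt g = N} =
      Nat.card {f : ℕ × ℕ →₀ ℕ // MemC n (kC a k n) f ∧ len f = l ∧ wt f = N - l} := by
  apply Nat.card_congr
  refine ⟨fun g => ⟨down g.1, ?_⟩, fun f => ⟨up f.1, ?_⟩, ?_, ?_⟩
  · obtain ⟨hD, hlen, hwt⟩ := g.2
    have hud : up (down g.1) = g.1 := up_down g.1 (fun c => isCPD_level0 hD.1 c)
    have hCPC : IsCPC n (down g.1) := by
      rintro ⟨m, c⟩ hp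
      rw [Finsupp.mem_support_iff] at hp
      rw [down_apply] at hp
      have hs := hD.1 (m + 1, c) (Finsupp.mem_support_iff.2 hp)
      simp only at hs
      have hm : 1 ≤ m := by
        rcases Nat.eq_zero_or_pos m with rfl | h
        · exact absurd (forced_one_D hn hak hD c) hp
        · exact h
      exact ⟨hm, by omega, by omega, by omega⟩
    refine ⟨transfer_ii_bwd hn hak hCPC (by rw [hud]; exact hD), ?_, ?_⟩
    · have := len_up (down g.1)
      rw [hud] at this
      omega
    · have := wt_up (down g.1)
      rw [hud] at this
      have := len_up (down g.1)
      rw [hud] at this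
      omega
  · obtain ⟨hC, hlen, hwt⟩ := f.2
    refine ⟨transfer_ii_fwd hn hak hC, ?_, ?_⟩
    · rw [len_up]; exact hlen
    · rw [wt_up]; omega
  · intro g
    exact Subtype.ext (up_down g.1 (fun c => isCPD_level0 g.2.1.1 c))
  · intro f
    exact Subtype.ext (down_up f.1)

lemma card_i_eq (hn : 1 ≤ n) (hak : a ≤ k) (hia : i ≤ a) (hjk : j ≤ k - a) (l N : ℕ)
    (hij : i + j ≤ l) (hlN : l ≤ N) :
    Nat.card {f : ℕ × ℕ →₀ ℕ // (MemC n (kC a k n) f ∧ len f = l ∧ wt f = N) ∧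
        f (1, 1) = i ∧ f (1, 2 * n + 1) = j} =
      Nat.card {μ : ℕ × ℕ →₀ ℕ // MemD (n + 1) (kDi a k n i j) μ ∧
        len μ = l - (i + j) ∧ wt μ = N - l} := by
  apply Nat.card_congr
  refine ⟨fun x => ⟨Mu n x.1, ?_⟩, fun y => ⟨Lam n i j y.1, ?_⟩, ?_, ?_⟩
  · obtain ⟨⟨hC, hlen, hwt⟩, hi, hj⟩ := x.2
    have hLM : Lam n i j (Mu n x.1) = x.1 :=
      Lam_Mu hn x.1 (fun c => isCPC_level0 hC.1 c) (forced_one_C hn hak hC) hi hj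
    refine ⟨transfer_i_fwd hn hak hC hi hj, ?_, ?_⟩
    · have h1 := len_Lam (n := n) (i := i) (j := j) (Mu n x.1)
      rw [hLM] at h1
      omega
    · have h1 := wt_Lam (n := n) (i := i) (j := j) (Mu n x.1)
      have h2 := len_Lam (n := n) (i := i) (j := j) (Mu n x.1)
      rw [hLM] at h1 h2
      omega
  · obtain ⟨hD, hlen, hwt⟩ := y.2
    have hv1 : Lam n i j y.1 (1, 1) = i := by
      rw [Lam_apply_one hn _ (isCPD_level0 hD.1 1), if_pos rfl, if_neg (by omega)]
      omega
    have hv2 : Lam n i j y.1 (1, 2 * n + 1) = j := by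
      rw [Lam_apply_one hn _ (isCPD_level0 hD.1 _), if_neg (by omega), if_pos rfl]
      omega
    refine ⟨⟨transfer_i_bwd hn hak hia hjk hD, ?_, ?_⟩, hv1, hv2⟩
    · rw [len_Lam]; omega
    · rw [wt_Lam]; omega
  · intro x
    exact Subtype.ext (Lam_Mu hn x.1 (fun c => isCPC_level0 x.2.1.1.1 c)
      (forced_one_C hn hak x.2.1.1) x.2.2.1 x.2.2.2)
  · intro y
    exact Subtype.ext (Mu_Lam hn y.1 (fun c => isCPD_level0 y.2.1.1 c))

lemma card_C_empty (κ : ℕ → ℕ) (l N : ℕ) (hlN : N < l) :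
    Nat.card {f : ℕ × ℕ →₀ ℕ // MemC n κ f ∧ len f = l ∧ wt f = N} = 0 := by
  have : IsEmpty {f : ℕ × ℕ →₀ ℕ // MemC n κ f ∧ len f = l ∧ wt f = N} := by
    refine ⟨fun x => ?_⟩
    obtain ⟨hC, hlen, hwt⟩ := x.2
    have := len_le_wt x.1 (fun p hp => (hC.1 p hp).1)
    omega
  exact Nat.card_of_isEmpty

lemma card_D_empty (nn : ℕ) (κ : ℕ → ℕ) (l N : ℕ) (hlN : N < l) :
    Nat.card {f : ℕ × ℕ →₀ ℕ // MemD nn κ f ∧ len f = l ∧ wt f = N} = 0 := by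
  have : IsEmpty {f : ℕ × ℕ →₀ ℕ // MemD nn κ f ∧ len f = l ∧ wt f = N} := by
    refine ⟨fun x => ?_⟩
    obtain ⟨hD, hlen, hwt⟩ := x.2
    have := len_le_wt x.1 (fun p hp => (hD.1 p hp).1)
    omega
  exact Nat.card_of_isEmpty

lemma card_i_fiber_empty (hn : 1 ≤ n) (κ : ℕ → ℕ) (l N : ℕ) (hij : l < i + j) :
    Nat.card {f : ℕ × ℕ →₀ ℕ // (MemC n κ f ∧ len f = l ∧ wt f = N) ∧
      f (1, 1) = i ∧ f (1, 2 * n + 1) = j} = 0 := by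
  have : IsEmpty {f : ℕ × ℕ →₀ ℕ // (MemC n κ f ∧ len f = l ∧ wt f = N) ∧
      f (1, 1) = i ∧ f (1, 2 * n + 1) = j} := by
    refine ⟨fun x => ?_⟩
    obtain ⟨⟨hC, hlen, hwt⟩, hi, hj⟩ := x.2
    have := pair_le_len x.1 (1, 1) (1, 2 * n + 1) (by simp [Prod.ext_iff]; omega)
    omega
  exact Nat.card_of_isEmpty

end Card

end CMPP
namespace CMPP

lemma coeff_term (m : ℕ) (G : PowerSeries (PowerSeries ℚ)) (l N : ℕ) :
    (PowerSeries.coeff N) ((PowerSeries.coeff l) ((Zv * Qv) ^ m * zsub 1 G)) =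
      if m ≤ l ∧ l ≤ N then
        (PowerSeries.coeff (N - l)) ((PowerSeries.coeff (l - m)) G)
      else 0 := by
  have e1 : (Zv * Qv) ^ m * zsub 1 G =
      PowerSeries.C (PowerSeries.X ^ m) *
        (PowerSeries.X ^ m * zsub 1 G) := by
    rw [Zv, Qv, mul_pow, ← map_pow, ← mul_assoc]
    ring
  rw [e1, PowerSeries.coeff_C_mul, PowerSeries.coeff_X_pow_mul' (zsub 1 G) m l]
  by_cases h1 : m ≤ l
  · rw [if_pos h1, zsub, PowerSeries.coeff_mk, one_mul, ← mul_assoc, ← pow_add,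
      show m + (l - m) = l from by omega, PowerSeries.coeff_X_pow_mul']
    by_cases h2 : l ≤ N
    · rw [if_pos h2, if_pos ⟨h1, h2⟩]
    · rw [if_neg h2, if_neg (by tauto)]
  · rw [if_neg h1, if_neg (by tauto), mul_zero, map_zero]

lemma part_i (a k : ℕ) (hak : a ≤ k) (n : ℕ) (hn : 1 ≤ n) :
    CGF n (fun t => if t = 0 then a else if t = n then k - a else 0) =
      ∑ i ∈ Finset.range (a + 1), ∑ j ∈ Finset.range (k - a + 1),
        (Zv * Qv) ^ (i + j) *
          zsub 1 (DGF (n + 1) (fun t =>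
            (if t = 0 then i else 0) + (if t = 1 then a - i else 0) +
              (if t = n then k - a - j else 0) + (if t = n + 1 then j else 0))) := by
  have hkC : (fun t => if t = 0 then a else if t = n then k - a else 0) = kC a k n := rfl
  have hkDi : ∀ x y : ℕ, (fun t =>
      (if t = 0 then x else 0) + (if t = 1 then a - x else 0) +
        (if t = n then k - a - y else 0) + (if t = n + 1 then y else 0)) = kDi a k n x y :=
    fun x y => rfl
  simp only [hkC, hkDi]
  apply PowerSeries.ext
  intro l
  apply PowerSeries.ext
  intro N
  simp only [map_sum, coeff_term, CGF, PowerSeries.coeff_mk, DGF]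
  by_cases hlN : l ≤ N
  · have hfin : Finite {f : ℕ × ℕ →₀ ℕ // MemC n (kC a k n) f ∧ len f = l ∧ wt f = N} :=
      finite_aux N (2 * n + 1) _
        (fun f hf => ⟨hf.2.2, fun p hp => ⟨(hf.1.1 p hp).1, (hf.1.1 p hp).2.2.1⟩⟩)
    have hsplit := card_split (a := a) (k := k) hn
      (fun f => MemC n (kC a k n) f ∧ len f = l ∧ wt f = N) hfin
      (fun f hf => ⟨bumpC_left hn hak hf.1, bumpC_right hn hak hf.1⟩)
    rw [hsplit]
    push_cast
    apply Finset.sum_congr rfl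
    intro x hx
    apply Finset.sum_congr rfl
    intro y hy
    simp only [Finset.mem_range] at hx hy
    by_cases hxy : x + y ≤ l
    · rw [if_pos ⟨hxy, hlN⟩]
      have := card_i_eq (i := x) (j := y) hn hak (by omega) (by omega) l N hxy hlN
      exact_mod_cast congrArg (Nat.cast : ℕ → ℚ) this
    · rw [if_neg (by tauto)]
      have := card_i_fiber_empty (i := x) (j := y) hn (kC a k n) l N (by omega)
      exact_mod_cast congrArg (Nat.cast : ℕ → ℚ) this
  · rw [card_C_empty (kC a k n) l N (by omega)]
    symm
    push_cast
    apply Finset.sum_eq_zero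
    intro x _
    apply Finset.sum_eq_zero
    intro y _
    rw [if_neg (by tauto)]

lemma part_ii (a k : ℕ) (hak : a ≤ k) (n : ℕ) (hn : 1 ≤ n) :
    DGF (n + 1) (fun t => if t = 0 then a else if t = n + 1 then k - a else 0) =
      zsub 1 (CGF n (fun t => if t = 0 then a else if t = n then k - a else 0)) := by
  have hkC : (fun t => if t = 0 then a else if t = n then k - a else 0) = kC a k n := rfl
  have hkD : (fun t => if t = 0 then a else if t = n + 1 then k - a else 0) = kDii a k n := rfl
  simp only [hkC, hkD]
  apply PowerSeries.ext
  intro l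
  apply PowerSeries.ext
  intro N
  simp only [DGF, zsub, CGF, PowerSeries.coeff_mk, one_mul, PowerSeries.coeff_X_pow_mul']
  by_cases h : l ≤ N
  · rw [if_pos h]
    exact_mod_cast congrArg (Nat.cast : ℕ → ℚ) (card_ii_eq hn hak l N h)
  · rw [if_neg h]
    have := card_D_empty (n + 1) (kDii a k n) l N (by omega)
    exact_mod_cast congrArg (Nat.cast : ℕ → ℚ) this

end CMPP

/-- Proposition 4.3: for integers `0 ≤ a ≤ k`,
(i) for every `n ≥ 1`:
`𝒞⁽ⁿ⁾_{(a,0^{n−1},k−a)}(z,q)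
  = Σ_{i=0}^{a} Σ_{j=0}^{k−a} (zq)^{i+j} 𝒟⁽ⁿ⁺¹⁾_{(i,a−i,0^{n−2},k−a−j,j)}(zq,q)`
(the `𝒟`-tuple written additively, so that for `n = 1` it is `(i, k−i−j, j)`);
(ii) for every `n ≥ 1`:
`𝒟⁽ⁿ⁺¹⁾_{(a,0ⁿ,k−a)}(z,q) = 𝒞⁽ⁿ⁾_{(a,0^{n−1},k−a)}(zq,q)`. -/
theorem cmpp_CD_functional_equations (a k : ℕ) (hak : a ≤ k) :
    (∀ n : ℕ, 1 ≤ n →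
      CGF n (fun t => if t = 0 then a else if t = n then k - a else 0) =
        ∑ i ∈ Finset.range (a + 1), ∑ j ∈ Finset.range (k - a + 1),
          (Zv * Qv) ^ (i + j) *
            zsub 1 (DGF (n + 1) (fun t =>
              (if t = 0 then i else 0) + (if t = 1 then a - i else 0) +
                (if t = n then k - a - j else 0) + (if t = n + 1 then j else 0)))) ∧
    (∀ n : ℕ, 1 ≤ n →
      DGF (n + 1) (fun t => if t = 0 then a else if t = n + 1 then k - a else 0) =
        zsub 1 (CGF n (fun t => if t = 0 then a else if t = n then k - a else 0))) :=
  ⟨fun n hn => CMPP.part_i a k hak n hn, fun n hn => CMPP.part_ii a k hak n hn⟩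
end
end

section
/- Let k ≥ 1 be an integer. Suppose (F_{(k_0,k_1,k_2)}) and (G_{(k_0,k_1,k_2)}) are two families of formal power series in z and q, indexed by triples of nonnegative integers with k_0 + k_1 + k_2 = k, that both satisfy: (i) the symmetry H_{(k_0,k_1,k_2)}(z,q) = H_{(k_2,k_1,k_0)}(z,q); (ii) for all 0 ≤ a ≤ k: H_{(a,0,k−a)}(z,q) = Σ_{i=0}^{a} Σ_{j=0}^{k−a} (zq²)^{i+j} H_{(i,k−i−j,j)}(zq²,q); (iii) for all a, b ≥ 0 with a + b ≤ k−1: H_{(a,k−a−b,b)}(z,q) − H_{(a+1,k−a−b−1,b)}(z,q) = Σ_{i=0}^{a} Σ_{j=0}^{k−a} (zq)^{k+i−a+min(0,j−b)} q^{i+j} H_{(i,k−i−j,j)}(zq²,q); and (iv) the initial condition H_{(k_0,k_1,k_2)}(0,q) = 1 for every index. Then F_{(k_0,k_1,k_2)} = G_{(k_0,k_1,k_2)} for all indices. -/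
noncomputable section

/-- A family `H` indexed by triples of nonnegative integers summing to `k` satisfying:
(i) the symmetry `H (k₀,k₁,k₂) = H (k₂,k₁,k₀)`;
(ii) for `0 ≤ a ≤ k`:
`H (a,0,k−a) (z) = Σ_{i=0}^{a} Σ_{j=0}^{k−a} (zq²)^{i+j} H (i,k−i−j,j) (zq²)`;
(iii) for `a + b ≤ k − 1`:
`H (a,k−a−b,b) (z) − H (a+1,k−a−b−1,b) (z)
  = Σ_{i=0}^{a} Σ_{j=0}^{k−a} (zq)^{k+i−a+min(0,j−b)} q^{i+j} H (i,k−i−j,j) (zq²)`;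
(iv) the initial condition `H (k₀,k₁,k₂) (0,q) = 1`. -/
def SatisfiesD3System (k : ℕ) (H : ℕ → ℕ → ℕ → PowerSeries (PowerSeries ℚ)) : Prop :=
  (∀ k₀ k₁ k₂ : ℕ, k₀ + k₁ + k₂ = k → H k₀ k₁ k₂ = H k₂ k₁ k₀) ∧
  (∀ a : ℕ, a ≤ k →
    H a 0 (k - a) =
      ∑ i ∈ Finset.range (a + 1), ∑ j ∈ Finset.range (k - a + 1),
        (Zv * Qv ^ 2) ^ (i + j) * zsub 2 (H i (k - i - j) j)) ∧
  (∀ a b : ℕ, a + b + 1 ≤ k →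
    H a (k - a - b) b - H (a + 1) (k - a - b - 1) b =
      ∑ i ∈ Finset.range (a + 1), ∑ j ∈ Finset.range (k - a + 1),
        (Zv * Qv) ^ (k + i - a - (b - j)) * Qv ^ (i + j) * zsub 2 (H i (k - i - j) j)) ∧
  (∀ k₀ k₁ k₂ : ℕ, k₀ + k₁ + k₂ = k →
    PowerSeries.coeff 0 (H k₀ k₁ k₂) = 1)

open PowerSeries

lemma coeff_zsub2 (l : ℕ) (H : PowerSeries (PowerSeries ℚ)) :
    coeff l (zsub 2 H) = X ^ (2 * l) * coeff l H := by
  simp [zsub]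

lemma term1_eq (p : ℕ) (H : PowerSeries (PowerSeries ℚ)) :
    (Zv * Qv ^ 2) ^ p * zsub 2 H = X ^ p * (C (X ^ (2 * p)) * zsub 2 H) := by
  rw [mul_pow, Zv, Qv, ← pow_mul, ← map_pow, mul_assoc, mul_comm 2 p]

lemma coeff_term1 (p l : ℕ) (H : PowerSeries (PowerSeries ℚ)) :
    coeff l ((Zv * Qv ^ 2) ^ p * zsub 2 H) =
      if p ≤ l then X ^ (2 * p) * (X ^ (2 * (l - p)) * coeff (l - p) H) else 0 := by
  rw [term1_eq, coeff_X_pow_mul']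
  split_ifs with h
  · rw [coeff_C_mul, coeff_zsub2]
  · rfl

lemma term2_eq (n m : ℕ) (H : PowerSeries (PowerSeries ℚ)) :
    (Zv * Qv) ^ n * Qv ^ m * zsub 2 H
      = X ^ n * (C (X ^ (n + m)) * zsub 2 H) := by
  rw [mul_pow, Zv, Qv, ← map_pow, ← map_pow, mul_assoc (X ^ n), ← map_mul, ← pow_add, mul_assoc]

lemma coeff_term2 (n m l : ℕ) (H : PowerSeries (PowerSeries ℚ)) :
    coeff l ((Zv * Qv) ^ n * Qv ^ m * zsub 2 H) =
      if n ≤ l then X ^ (n + m) * (X ^ (2 * (l - n)) * coeff (l - n) H) else 0 := by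
  rw [term2_eq, coeff_X_pow_mul']
  split_ifs with h
  · rw [coeff_C_mul, coeff_zsub2]
  · rfl


/-- Lemma 4.6: for `k ≥ 1`, the functional equations (4.8) and (4.9), together with the
symmetry relation (4.6a) and the initial conditions `H(0,q) = 1`, uniquely determine the
family of two-variable series indexed by level-`2k` dominant integral weights of
`D₃⁽²⁾`: any two families satisfying the system coincide. -/
theorem D3_system_unique_solution (k : ℕ) (hk : 1 ≤ k)
    (F G : ℕ → ℕ → ℕ → PowerSeries (PowerSeries ℚ))
    (hF : SatisfiesD3System k F) (hG : SatisfiesD3System k G) :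
    ∀ k₀ k₁ k₂ : ℕ, k₀ + k₁ + k₂ = k → F k₀ k₁ k₂ = G k₀ k₁ k₂ := by
  obtain ⟨Fsym, F2, F3, F0⟩ := hF
  obtain ⟨Gsym, G2, G3, G0⟩ := hG
  suffices h : ∀ l : ℕ, ∀ k₀ k₁ k₂ : ℕ, k₀ + k₁ + k₂ = k →
      coeff l (F k₀ k₁ k₂) = coeff l (G k₀ k₁ k₂) by
    intro k₀ k₁ k₂ hs
    exact PowerSeries.ext fun l => h l k₀ k₁ k₂ hs
  intro l
  induction l using Nat.strong_induction_on with
  | _ l IH =>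
    rcases Nat.eq_zero_or_pos l with rfl | hl
    · intro k₀ k₁ k₂ hs; rw [F0 _ _ _ hs, G0 _ _ _ hs]
    set cf : ℕ → ℕ → ℕ → PowerSeries ℚ := fun i m j =>
      coeff l (F i m j) - coeff l (G i m j) with hcf
    have step1 : ∀ a b : ℕ, a + b + 1 ≤ k →
        cf a (k - a - b) b = cf (a + 1) (k - a - b - 1) b := by
      intro a b hab
      have hF' := congrArg (coeff l) (F3 a b hab)
      have hG' := congrArg (coeff l) (G3 a b hab)
      rw [map_sub] at hF' hG'
      have hsum : coeff l
          (∑ i ∈ Finset.range (a + 1), ∑ j ∈ Finset.range (k - a + 1),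
            (Zv * Qv) ^ (k + i - a - (b - j)) * Qv ^ (i + j) * zsub 2 (F i (k - i - j) j))
          = coeff l
          (∑ i ∈ Finset.range (a + 1), ∑ j ∈ Finset.range (k - a + 1),
            (Zv * Qv) ^ (k + i - a - (b - j)) * Qv ^ (i + j) * zsub 2 (G i (k - i - j) j)) := by
        simp only [map_sum]
        refine Finset.sum_congr rfl fun i hi => Finset.sum_congr rfl fun j hj => ?_
        have hi' := Finset.mem_range.mp hi
        have hj' := Finset.mem_range.mp hj
        rw [coeff_term2, coeff_term2]
        split_ifs with h
        · rw [IH (l - (k + i - a - (b - j))) (by omega) i (k - i - j) j (by omega)]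
        · rfl
      have key : coeff l (F a (k - a - b) b)
            - coeff l (F (a + 1) (k - a - b - 1) b)
          = coeff l (G a (k - a - b) b)
            - coeff l (G (a + 1) (k - a - b - 1) b) := by
        rw [hF', hG', hsum]
      simp only [hcf]
      linear_combination key
    have step2 : ∀ a : ℕ, a ≤ k → cf a 0 (k - a) = X ^ (2 * l) * cf 0 k 0 := by
      intro a ha
      have hF' := congrArg (coeff l) (F2 a ha)
      have hG' := congrArg (coeff l) (G2 a ha)
      simp only [map_sum] at hF' hG'
      have hrw : cf a 0 (k - a) = ∑ i ∈ Finset.range (a + 1), ∑ j ∈ Finset.range (k - a + 1),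
          (coeff l ((Zv * Qv ^ 2) ^ (i + j) * zsub 2 (F i (k - i - j) j))
            - coeff l ((Zv * Qv ^ 2) ^ (i + j) * zsub 2 (G i (k - i - j) j))) := by
        simp only [hcf]
        rw [hF', hG', ← Finset.sum_sub_distrib]
        exact Finset.sum_congr rfl fun i _ => (Finset.sum_sub_distrib _ _).symm
      have hdiff : ∀ i j : ℕ, i ≤ a → j ≤ k - a → ¬(i = 0 ∧ j = 0) →
          coeff l ((Zv * Qv ^ 2) ^ (i + j) * zsub 2 (F i (k - i - j) j))
            - coeff l ((Zv * Qv ^ 2) ^ (i + j) * zsub 2 (G i (k - i - j) j)) = 0 := by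
        intro i j hi hj hij
        rw [coeff_term1, coeff_term1]
        split_ifs with h
        · rw [IH (l - (i + j)) (by omega) i (k - i - j) j (by omega), sub_self]
        · exact sub_self 0
      rw [hrw]
      have e1 : (∑ i ∈ Finset.range (a + 1), ∑ j ∈ Finset.range (k - a + 1),
          (coeff l ((Zv * Qv ^ 2) ^ (i + j) * zsub 2 (F i (k - i - j) j))
            - coeff l ((Zv * Qv ^ 2) ^ (i + j) * zsub 2 (G i (k - i - j) j))))
          = ∑ j ∈ Finset.range (k - a + 1),
          (coeff l ((Zv * Qv ^ 2) ^ (0 + j) * zsub 2 (F 0 (k - 0 - j) j))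
            - coeff l ((Zv * Qv ^ 2) ^ (0 + j) * zsub 2 (G 0 (k - 0 - j) j))) := by
        refine Finset.sum_eq_single_of_mem 0 (Finset.mem_range.mpr (by omega)) ?_
        intro i hi hne
        refine Finset.sum_eq_zero fun j hj => ?_
        have hi' := Finset.mem_range.mp hi
        have hj' := Finset.mem_range.mp hj
        exact hdiff i j (by omega) (by omega) (fun hc => hne hc.1)
      have e2 : (∑ j ∈ Finset.range (k - a + 1),
          (coeff l ((Zv * Qv ^ 2) ^ (0 + j) * zsub 2 (F 0 (k - 0 - j) j))
            - coeff l ((Zv * Qv ^ 2) ^ (0 + j) * zsub 2 (G 0 (k - 0 - j) j))))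
          = coeff l ((Zv * Qv ^ 2) ^ (0 + 0) * zsub 2 (F 0 (k - 0 - 0) 0))
            - coeff l ((Zv * Qv ^ 2) ^ (0 + 0) * zsub 2 (G 0 (k - 0 - 0) 0)) := by
        refine Finset.sum_eq_single_of_mem 0 (Finset.mem_range.mpr (by omega)) ?_
        intro j hj hne
        have hj' := Finset.mem_range.mp hj
        exact hdiff 0 j (by omega) (by omega) (fun hc => hne hc.2)
      rw [e1, e2, coeff_term1, coeff_term1]
      simp only [Nat.add_zero, Nat.sub_zero, if_pos (Nat.zero_le l), Nat.mul_zero, pow_zero,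
        one_mul, hcf]
      ring
    have chain : ∀ b, b ≤ k → ∀ d a : ℕ, a + b + d = k → cf a (k - a - b) b = cf (k - b) 0 b := by
      intro b hb d
      induction d with
      | zero =>
        intro a h
        have h1 : a = k - b := by omega
        have h2 : k - a - b = 0 := by omega
        rw [h2, h1]
      | succ d ih =>
        intro a h
        rw [step1 a b (by omega)]
        have e : k - a - b - 1 = k - (a + 1) - b := by omega
        rw [e]
        exact ih (a + 1) (by omega)
    have c00 : cf 0 k 0 = 0 := by
      have h1 : cf 0 (k - 0 - 0) 0 = cf (k - 0) 0 0 := chain 0 (Nat.zero_le k) k 0 (by omega)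
      simp only [Nat.sub_zero] at h1
      have h2 := step2 k le_rfl
      rw [Nat.sub_self] at h2
      have h3 : (1 - (X : PowerSeries ℚ) ^ (2 * l)) * cf 0 k 0 = 0 := by
        linear_combination h1 + h2
      rcases mul_eq_zero.mp h3 with h | h
      · exfalso
        have hc := congrArg (constantCoeff) h
        simp only [map_sub, map_pow, map_one, constantCoeff_X, map_zero,
          zero_pow (by omega : 2 * l ≠ 0), sub_zero] at hc
        exact one_ne_zero hc
      · exact h
    intro k₀ k₁ k₂ hs
    have hch := chain k₂ (by omega) k₁ k₀ (by omega)
    have h2 := step2 (k - k₂) (by omega)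
    have e : k - (k - k₂) = k₂ := by omega
    rw [e] at h2
    have hfin : cf k₀ k₁ k₂ = 0 := by
      have hk1 : k₁ = k - k₀ - k₂ := by omega
      rw [hk1, hch, h2, c00, mul_zero]
    simpa only [hcf, sub_eq_zero] using hfin
end
end

section
/- For all n ≥ 1 (type C) and n ≥ 2 (type D) and all nonnegative integers k_0, …, k_n, colour reversal c ↦ m+1−c (where m is the number of colours, m = 2n+1 for type C and m = 2n−1 for type D) gives a bijection from 𝒞_{k_0,…,k_n} onto 𝒞_{k_n,…,k_0}, respectively from 𝒟_{k_0,…,k_n} onto 𝒟_{k_n,…,k_0}, preserving |λ| and l(λ). Consequently 𝒞^{(n)}_{(k_0,…,k_n)}(z,q) = 𝒞^{(n)}_{(k_n,…,k_0)}(z,q) and 𝒟^{(n)}_{(k_0,…,k_n)}(z,q) = 𝒟^{(n)}_{(k_n,…,k_0)}(z,q). -/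
noncomputable section

/-- Colour reversal `c ↦ m + 1 - c` on an `m`-coloured partition given by its
multiplicity function. -/
def crev (m : ℕ) (f : ℕ × ℕ →₀ ℕ) : ℕ × ℕ →₀ ℕ :=
  Finsupp.mapDomain (fun p : ℕ × ℕ => (p.1, m + 1 - p.2)) f

/-! ### Auxiliary lemmas for colour reversal -/

lemma crev_apply (m : ℕ) (f : ℕ × ℕ →₀ ℕ) (hf : ∀ p ∈ f.support, 1 ≤ p.2 ∧ p.2 ≤ m)
    {i c : ℕ} (hc1 : 1 ≤ c) (hc2 : c ≤ m) : crev m f (i, c) = f (i, m + 1 - c) := by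
  have e : (i, c) = (fun p : ℕ × ℕ => (p.1, m + 1 - p.2)) (i, m + 1 - c) := by
    show (i, c) = (i, m + 1 - (m + 1 - c))
    rw [Prod.mk.injEq]
    exact ⟨rfl, by omega⟩
  rw [e]
  exact Finsupp.mapDomain_apply' {p : ℕ × ℕ | p.2 ≤ m} f (fun p hp => (hf p hp).2)
    (fun p hp q hq hpq => by
      obtain ⟨p1, p2⟩ := p
      obtain ⟨q1, q2⟩ := q
      simp only [Set.mem_setOf_eq] at hp hq
      simp only [Prod.mk.injEq] at hpq ⊢
      omega)
    (by show m + 1 - c ≤ m; omega)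

lemma wt_crev (m : ℕ) (f : ℕ × ℕ →₀ ℕ) : wt (crev m f) = wt f := by
  unfold wt crev
  exact Finsupp.sum_mapDomain_index (h := fun (p : ℕ × ℕ) (v : ℕ) => p.1 * v)
    (fun (b : ℕ × ℕ) => mul_zero b.1)
    (fun (b : ℕ × ℕ) (m₁ m₂ : ℕ) => Nat.mul_add b.1 m₁ m₂)

lemma len_crev (m : ℕ) (f : ℕ × ℕ →₀ ℕ) : len (crev m f) = len f := by
  unfold len crev
  exact Finsupp.sum_mapDomain_index (h := fun (_ : ℕ × ℕ) (v : ℕ) => v)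
    (fun (_ : ℕ × ℕ) => rfl) (fun (_ : ℕ × ℕ) (_ _ : ℕ) => rfl)

lemma crev_crev (m : ℕ) (f : ℕ × ℕ →₀ ℕ) (hf : ∀ p ∈ f.support, 1 ≤ p.2 ∧ p.2 ≤ m) :
    crev m (crev m f) = f := by
  unfold crev
  rw [← Finsupp.mapDomain_comp,
    Finsupp.mapDomain_congr (g := id) (fun x hx => by
      obtain ⟨h1, h2⟩ := hf x hx
      cases x with
      | mk a b =>
        have h2' : m + 1 - (m + 1 - b) = b := by omega
        show ((a, m + 1 - (m + 1 - b)) : ℕ × ℕ) = (a, b)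
        rw [h2']),
    Finsupp.mapDomain_id]

lemma memC_congr (n : ℕ) (k₁ k₂ : ℕ → ℕ) (h : ∀ c ≤ n, k₁ c = k₂ c) (f : ℕ × ℕ →₀ ℕ)
    (hf : MemC n k₁ f) : MemC n k₂ f := by
  refine ⟨hf.1, fun p hp hstep => ?_⟩
  have hb := hf.2 p hp hstep
  have e1 : ∀ j ∈ Finset.range (2 * n + 1),
      fextC k₂ f (p j) (j + 1) = fextC k₁ f (p j) (j + 1) := by
    intro j hj
    rw [Finset.mem_range] at hj
    unfold fextC
    split_ifs with h1 h2
    · exact (h _ (by omega)).symm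
    · rfl
    · rfl
  have e2 : ∑ c ∈ Finset.range (n + 1), k₂ c = ∑ c ∈ Finset.range (n + 1), k₁ c :=
    Finset.sum_congr rfl fun c hc =>
      (h c (Nat.lt_succ_iff.mp (Finset.mem_range.mp hc))).symm
  rw [Finset.sum_congr rfl e1, e2]
  exact hb

lemma memC_crev (n : ℕ) (k : ℕ → ℕ) (f : ℕ × ℕ →₀ ℕ) (hf : MemC n k f) :
    MemC n (fun c => k (n - c)) (crev (2 * n + 1) f) := by
  obtain ⟨hcp, hpath⟩ := hf
  have hsupp : ∀ p ∈ f.support, 1 ≤ p.2 ∧ p.2 ≤ 2 * n + 1 :=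
    fun p hp => ⟨(hcp p hp).2.1, (hcp p hp).2.2.1⟩
  constructor
  · intro q hq
    have hq' := Finsupp.mapDomain_support hq
    simp only [Finset.mem_image] at hq'
    obtain ⟨p, hp, rfl⟩ := hq'
    obtain ⟨h1, h2, h3, h4⟩ := hcp p hp
    exact ⟨h1, by omega, by omega, by omega⟩
  · intro p hp hstep
    set q : ℕ → ℤ := fun j => p (2 * n - j) with hqdef
    have hq_valid : ∀ j < 2 * n + 1, -1 ≤ q j ∧ (q j + (j : ℤ) + 1) % 2 = 0 := by
      intro j hj
      have h := hp (2 * n - j) (by omega)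
      refine ⟨h.1, ?_⟩
      have h2 := h.2
      simp only [hqdef]
      omega
    have hq_step : ∀ j, j + 1 < 2 * n + 1 → |q (j + 1) - q j| = 1 := by
      intro j hj
      have h := hstep (2 * n - j - 1) (by omega)
      have e : 2 * n - j - 1 + 1 = 2 * n - j := by omega
      rw [e] at h
      have e2 : 2 * n - (j + 1) = 2 * n - j - 1 := by omega
      simp only [hqdef, e2]
      rw [abs_sub_comm]
      exact h
    have key : ∀ j < 2 * n + 1,
        fextC (fun c => k (n - c)) (crev (2 * n + 1) f) (p j) (j + 1)
          = fextC k f (p j) (2 * n + 1 - j) := by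
      intro j hj
      have hpj := (hp j hj).1
      unfold fextC
      by_cases h1 : p j = -1
      · rw [if_pos h1, if_pos h1]
        split_ifs with h2 h3 h3
        · show k (n - (j + 1 - 1) / 2) = k ((2 * n + 1 - j - 1) / 2)
          congr 1 <;> omega
        · exfalso; omega
        · exfalso; omega
        · rfl
      · rw [if_neg h1, if_neg h1]
        rw [crev_apply (2 * n + 1) f hsupp (by omega) (by omega)]
        have e : 2 * n + 1 + 1 - (j + 1) = 2 * n + 1 - j := by omega
        rw [e]
    have hsum1 : ∑ j ∈ Finset.range (2 * n + 1),
        fextC (fun c => k (n - c)) (crev (2 * n + 1) f) (p j) (j + 1)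
          = ∑ j ∈ Finset.range (2 * n + 1), fextC k f (q j) (j + 1) := by
      rw [← Finset.sum_range_reflect (fun j => fextC k f (q j) (j + 1)) (2 * n + 1)]
      apply Finset.sum_congr rfl
      intro j hj
      rw [Finset.mem_range] at hj
      rw [key j hj]
      have e1 : q (2 * n + 1 - 1 - j) = p j := by
        simp only [hqdef]
        congr 1 <;> omega
      have e2 : 2 * n + 1 - 1 - j + 1 = 2 * n + 1 - j := by omega
      rw [e1, e2]
    have hsum2 : ∑ c ∈ Finset.range (n + 1), k (n - c)
        = ∑ c ∈ Finset.range (n + 1), k c := by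
      rw [← Finset.sum_range_reflect k (n + 1)]
      apply Finset.sum_congr rfl
      intro c hc
      congr 1 <;> omega
    calc ∑ j ∈ Finset.range (2 * n + 1),
          fextC (fun c => k (n - c)) (crev (2 * n + 1) f) (p j) (j + 1)
        = ∑ j ∈ Finset.range (2 * n + 1), fextC k f (q j) (j + 1) := hsum1
      _ ≤ ∑ c ∈ Finset.range (n + 1), k c := hpath q hq_valid hq_step
      _ = ∑ c ∈ Finset.range (n + 1), k (n - c) := hsum2.symm

lemma memD_congr (n : ℕ) (k₁ k₂ : ℕ → ℕ) (h : ∀ c ≤ n, k₁ c = k₂ c) (f : ℕ × ℕ →₀ ℕ)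
    (hf : MemD n k₁ f) : MemD n k₂ f := by
  refine ⟨hf.1, fun p hp hstep => ?_⟩
  have hb := hf.2 p hp hstep
  have e1 : ∀ j ∈ Finset.range (2 * n - 1),
      fextD n k₂ f (p j) (j + 1) = fextD n k₁ f (p j) (j + 1) := by
    intro j hj
    rw [Finset.mem_range] at hj
    unfold fextD
    split_ifs
    all_goals first
      | rfl
      | exact (h _ (by omega)).symm
  have e2 : ∑ c ∈ Finset.range (n + 1), k₂ c = ∑ c ∈ Finset.range (n + 1), k₁ c :=
    Finset.sum_congr rfl fun c hc =>
      (h c (Nat.lt_succ_iff.mp (Finset.mem_range.mp hc))).symm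
  rw [Finset.sum_congr rfl e1, e2]
  exact hb

lemma memD_crev (n : ℕ) (hn : 2 ≤ n) (k : ℕ → ℕ) (f : ℕ × ℕ →₀ ℕ) (hf : MemD n k f) :
    MemD n (fun c => k (n - c)) (crev (2 * n - 1) f) := by
  obtain ⟨hcp, hpath⟩ := hf
  have hsupp : ∀ p ∈ f.support, 1 ≤ p.2 ∧ p.2 ≤ 2 * n - 1 :=
    fun p hp => ⟨(hcp p hp).2.1, (hcp p hp).2.2.1⟩
  constructor
  · intro q hq
    have hq' := Finsupp.mapDomain_support hq
    simp only [Finset.mem_image] at hq'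
    obtain ⟨p, hp, rfl⟩ := hq'
    obtain ⟨h1, h2, h3, h4⟩ := hcp p hp
    exact ⟨h1, by omega, by omega, by omega⟩
  · intro p hp hstep
    set q : ℕ → ℤ := fun j => p (2 * n - 2 - j) with hqdef
    have hq_valid : ∀ j < 2 * n - 1, -1 ≤ q j ∧ (q j + (j : ℤ) + 1) % 2 = 1 := by
      intro j hj
      have h := hp (2 * n - 2 - j) (by omega)
      refine ⟨h.1, ?_⟩
      have h2 := h.2
      simp only [hqdef]
      omega
    have hq_step : ∀ j, j + 1 < 2 * n - 1 → |q (j + 1) - q j| = 1 := by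
      intro j hj
      have h := hstep (2 * n - 3 - j) (by omega)
      have e : 2 * n - 3 - j + 1 = 2 * n - 2 - j := by omega
      rw [e] at h
      have e2 : 2 * n - 2 - (j + 1) = 2 * n - 3 - j := by omega
      simp only [hqdef, e2]
      rw [abs_sub_comm]
      exact h
    have key : ∀ j < 2 * n - 1,
        fextD n (fun c => k (n - c)) (crev (2 * n - 1) f) (p j) (j + 1)
          = fextD n k f (p j) (2 * n - 1 - j) := by
      intro j hj
      have hpj := (hp j hj).1
      unfold fextD
      by_cases h1 : p j = -1
      · rw [if_pos h1, if_pos h1]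
        split_ifs with h2 h3 h3
        · show k (n - (j + 1) / 2) = k ((2 * n - 1 - j) / 2)
          congr 1 <;> omega
        · exfalso; omega
        · exfalso; omega
        · rfl
      · rw [if_neg h1, if_neg h1]
        by_cases h2 : p j = 0
        · rw [if_pos h2, if_pos h2]
          split_ifs
          all_goals first
            | rfl
            | (exfalso; omega)
            | (beta_reduce; congr 1 <;> omega)
        · rw [if_neg h2, if_neg h2]
          rw [crev_apply (2 * n - 1) f hsupp (by omega) (by omega)]
          have e : 2 * n - 1 + 1 - (j + 1) = 2 * n - 1 - j := by omega
          rw [e]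
    have hsum1 : ∑ j ∈ Finset.range (2 * n - 1),
        fextD n (fun c => k (n - c)) (crev (2 * n - 1) f) (p j) (j + 1)
          = ∑ j ∈ Finset.range (2 * n - 1), fextD n k f (q j) (j + 1) := by
      rw [← Finset.sum_range_reflect (fun j => fextD n k f (q j) (j + 1)) (2 * n - 1)]
      apply Finset.sum_congr rfl
      intro j hj
      rw [Finset.mem_range] at hj
      rw [key j hj]
      have e1 : q (2 * n - 1 - 1 - j) = p j := by
        simp only [hqdef]
        congr 1 <;> omega
      have e2 : 2 * n - 1 - 1 - j + 1 = 2 * n - 1 - j := by omega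
      rw [e1, e2]
    have hsum2 : ∑ c ∈ Finset.range (n + 1), k (n - c)
        = ∑ c ∈ Finset.range (n + 1), k c := by
      rw [← Finset.sum_range_reflect k (n + 1)]
      apply Finset.sum_congr rfl
      intro c hc
      congr 1 <;> omega
    calc ∑ j ∈ Finset.range (2 * n - 1),
          fextD n (fun c => k (n - c)) (crev (2 * n - 1) f) (p j) (j + 1)
        = ∑ j ∈ Finset.range (2 * n - 1), fextD n k f (q j) (j + 1) := hsum1
      _ ≤ ∑ c ∈ Finset.range (n + 1), k c := hpath q hq_valid hq_step
      _ = ∑ c ∈ Finset.range (n + 1), k (n - c) := hsum2.symm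

lemma card_eq_C (n : ℕ) (k : ℕ → ℕ) (l N : ℕ) :
    Nat.card {f : ℕ × ℕ →₀ ℕ // MemC n k f ∧ len f = l ∧ wt f = N}
      = Nat.card {f : ℕ × ℕ →₀ ℕ //
          MemC n (fun c => k (n - c)) f ∧ len f = l ∧ wt f = N} := by
  have hsuppC : ∀ (k' : ℕ → ℕ) (f : ℕ × ℕ →₀ ℕ), MemC n k' f →
      ∀ p ∈ f.support, 1 ≤ p.2 ∧ p.2 ≤ 2 * n + 1 :=
    fun k' f hf p hp => ⟨(hf.1 p hp).2.1, (hf.1 p hp).2.2.1⟩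
  apply Nat.card_congr
  refine ⟨fun x => ⟨crev (2 * n + 1) x.1, memC_crev n k x.1 x.2.1,
      (len_crev _ _).trans x.2.2.1, (wt_crev _ _).trans x.2.2.2⟩,
    fun x => ⟨crev (2 * n + 1) x.1,
      memC_congr n _ k (fun c hc => by
        show k (n - (n - c)) = k c
        rw [Nat.sub_sub_self hc]) _
        (memC_crev n (fun c => k (n - c)) x.1 x.2.1),
      (len_crev _ _).trans x.2.2.1, (wt_crev _ _).trans x.2.2.2⟩,
    fun x => Subtype.ext (crev_crev _ _ (hsuppC k x.1 x.2.1)),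
    fun x => Subtype.ext (crev_crev _ _ (hsuppC _ x.1 x.2.1))⟩

lemma card_eq_D (n : ℕ) (hn : 2 ≤ n) (k : ℕ → ℕ) (l N : ℕ) :
    Nat.card {f : ℕ × ℕ →₀ ℕ // MemD n k f ∧ len f = l ∧ wt f = N}
      = Nat.card {f : ℕ × ℕ →₀ ℕ //
          MemD n (fun c => k (n - c)) f ∧ len f = l ∧ wt f = N} := by
  have hsuppD : ∀ (k' : ℕ → ℕ) (f : ℕ × ℕ →₀ ℕ), MemD n k' f →
      ∀ p ∈ f.support, 1 ≤ p.2 ∧ p.2 ≤ 2 * n - 1 :=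
    fun k' f hf p hp => ⟨(hf.1 p hp).2.1, (hf.1 p hp).2.2.1⟩
  apply Nat.card_congr
  refine ⟨fun x => ⟨crev (2 * n - 1) x.1, memD_crev n hn k x.1 x.2.1,
      (len_crev _ _).trans x.2.2.1, (wt_crev _ _).trans x.2.2.2⟩,
    fun x => ⟨crev (2 * n - 1) x.1,
      memD_congr n _ k (fun c hc => by
        show k (n - (n - c)) = k c
        rw [Nat.sub_sub_self hc]) _
        (memD_crev n hn (fun c => k (n - c)) x.1 x.2.1),
      (len_crev _ _).trans x.2.2.1, (wt_crev _ _).trans x.2.2.2⟩,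
    fun x => Subtype.ext (crev_crev _ _ (hsuppD k x.1 x.2.1)),
    fun x => Subtype.ext (crev_crev _ _ (hsuppD _ x.1 x.2.1))⟩

lemma CGF_rev (n : ℕ) (k : ℕ → ℕ) : CGF n k = CGF n (fun c => k (n - c)) := by
  unfold CGF
  refine PowerSeries.ext fun l => ?_
  simp only [PowerSeries.coeff_mk]
  refine PowerSeries.ext fun N => ?_
  simp only [PowerSeries.coeff_mk]
  exact_mod_cast card_eq_C n k l N

lemma DGF_rev (n : ℕ) (hn : 2 ≤ n) (k : ℕ → ℕ) :
    DGF n k = DGF n (fun c => k (n - c)) := by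
  unfold DGF
  refine PowerSeries.ext fun l => ?_
  simp only [PowerSeries.coeff_mk]
  refine PowerSeries.ext fun N => ?_
  simp only [PowerSeries.coeff_mk]
  exact_mod_cast card_eq_D n hn k l N

/-- Equation (4.6): for all `n ≥ 1` (type `C`, with `m = 2n+1` colours) and all `n ≥ 2`
(type `D`, with `m = 2n−1` colours) and all boundary data `k₀, …, kₙ`, colour reversal
`c ↦ m+1−c` maps `𝒞_{k₀,…,kₙ}` onto `𝒞_{kₙ,…,k₀}` (resp. `𝒟_{k₀,…,kₙ}` onto
`𝒟_{kₙ,…,k₀}`) bijectively (it is an involution), preserving weight and length;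
consequently the generating functions satisfy
`𝒞⁽ⁿ⁾_{(k₀,…,kₙ)}(z,q) = 𝒞⁽ⁿ⁾_{(kₙ,…,k₀)}(z,q)` and
`𝒟⁽ⁿ⁾_{(k₀,…,kₙ)}(z,q) = 𝒟⁽ⁿ⁾_{(kₙ,…,k₀)}(z,q)`. -/
theorem colour_reversal_symmetry :
    (∀ n : ℕ, 1 ≤ n → ∀ k : ℕ → ℕ,
      (∀ f : ℕ × ℕ →₀ ℕ, MemC n k f →
        MemC n (fun c => k (n - c)) (crev (2 * n + 1) f) ∧
          wt (crev (2 * n + 1) f) = wt f ∧ len (crev (2 * n + 1) f) = len f ∧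
          crev (2 * n + 1) (crev (2 * n + 1) f) = f) ∧
      CGF n k = CGF n (fun c => k (n - c))) ∧
    (∀ n : ℕ, 2 ≤ n → ∀ k : ℕ → ℕ,
      (∀ f : ℕ × ℕ →₀ ℕ, MemD n k f →
        MemD n (fun c => k (n - c)) (crev (2 * n - 1) f) ∧
          wt (crev (2 * n - 1) f) = wt f ∧ len (crev (2 * n - 1) f) = len f ∧
          crev (2 * n - 1) (crev (2 * n - 1) f) = f) ∧
      DGF n k = DGF n (fun c => k (n - c))) := by
  constructor
  · intro n hn k
    refine ⟨fun f hf => ?_, CGF_rev n k⟩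
    have hsupp : ∀ p ∈ f.support, 1 ≤ p.2 ∧ p.2 ≤ 2 * n + 1 :=
      fun p hp => ⟨(hf.1 p hp).2.1, (hf.1 p hp).2.2.1⟩
    exact ⟨memC_crev n k f hf, wt_crev _ _, len_crev _ _, crev_crev _ _ hsupp⟩
  · intro n hn k
    refine ⟨fun f hf => ?_, DGF_rev n hn k⟩
    have hsupp : ∀ p ∈ f.support, 1 ≤ p.2 ∧ p.2 ≤ 2 * n - 1 :=
      fun p hp => ⟨(hf.1 p hp).2.1, (hf.1 p hp).2.2.1⟩
    exact ⟨memD_crev n hn k f hf, wt_crev _ _, len_crev _ _, crev_crev _ _ hsupp⟩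
end
end
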